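/- arXiv:1608.01010 — 7 statements merged into one kernel-verified Lean document; each statement's English description precedes it below -/
import Mathlib

section
/- For every nonzero complex number p with e^{-p/2^k} ≠ -1 for all k ≥ 1 and e^{-p} ≠ 1, one has 1/p = 1/(1 - e^{-p}) - ∑_{k=1}^∞ 2^{-k}/(1 + e^{-p/2^k}), where the series converges. -/
open Complex Filter Finset Topology

theorem dyadic_decomposition (p : ℂ) (hp : p ≠ 0)
    (h : ∀ k : ℕ, 1 ≤ k → Complex.exp (-p / 2 ^ k) ≠ -1)
    (h' : Complex.exp (-p) ≠ 1) :
    HasSum (fun k : ℕ => (1 / 2 ^ (k + 1) : ℂ) / (1 + Complex.exp (-p / 2 ^ (k + 1))))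
      (1 / (1 - Complex.exp (-p)) - 1 / p) := by
  set a : ℕ → ℂ := fun k => (1 / 2 ^ (k + 1) : ℂ) / (1 + Complex.exp (-p / 2 ^ (k + 1))) with ha
  -- exp(-p/2^n) ≠ 1 for all n
  have hne : ∀ n : ℕ, Complex.exp (-p / 2 ^ n) ≠ 1 := by
    intro n hcon
    apply h'
    have : Complex.exp (-p / 2 ^ n) ^ (2 ^ n) = Complex.exp (-p) := by
      rw [← Complex.exp_nat_mul]
      congr 1
      field_simp
      norm_num
    rw [hcon, one_pow] at this
    exact this.symm
  set f : ℕ → ℂ := fun n => 1 / (2 ^ n * (1 - Complex.exp (-p / 2 ^ n))) with hf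
  -- squaring relation
  have hsq : ∀ k : ℕ, Complex.exp (-p / 2 ^ (k + 1)) ^ 2 = Complex.exp (-p / 2 ^ k) := by
    intro k
    rw [← Complex.exp_nat_mul]
    congr 1
    push_cast
    field_simp
    ring
  -- telescoping
  have htel : ∀ k : ℕ, a k = f k - f (k + 1) := by
    intro k
    have key : ∀ z : ℂ, 1 - z ≠ 0 → 1 + z ≠ 0 →
        (1 / 2 ^ (k + 1) : ℂ) / (1 + z)
          = 1 / (2 ^ k * (1 - z ^ 2)) - 1 / (2 ^ (k + 1) * (1 - z)) := by
      intro z h1 h2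
      have hz2 : (1 : ℂ) - z ^ 2 ≠ 0 := by
        intro hc
        have : (1 - z) * (1 + z) = 0 := by linear_combination hc
        rcases mul_eq_zero.mp this with hc' | hc'
        · exact h1 hc'
        · exact h2 hc'
      have h2k : (2 : ℂ) ^ k ≠ 0 := pow_ne_zero _ two_ne_zero
      have h2k' : (2 : ℂ) ^ (k + 1) ≠ 0 := pow_ne_zero _ two_ne_zero
      field_simp
      ring
    have hz1 : (1 : ℂ) - Complex.exp (-p / 2 ^ (k + 1)) ≠ 0 := sub_ne_zero.mpr (hne (k+1)).symm
    have hz2 : (1 : ℂ) + Complex.exp (-p / 2 ^ (k + 1)) ≠ 0 := by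
      intro hc
      apply h (k + 1) (by omega)
      linear_combination hc
    simp only [ha, hf]
    rw [← hsq k]
    exact key _ hz1 hz2
  -- derivative fact: (1 - exp(-z))/z → 1 as z → 0
  have h1 : HasDerivAt (fun z : ℂ => Complex.exp (-z)) (-1) 0 := by
    have := (hasDerivAt_neg (0 : ℂ)).cexp
    simpa using this
  have hdiff : HasDerivAt (fun z : ℂ => 1 - Complex.exp (-z)) 1 0 := by
    have := (hasDerivAt_const (0 : ℂ) (1 : ℂ)).sub h1
    rw [sub_neg_eq_add, zero_add] at this
    exact this
  have hslope : Tendsto (fun z : ℂ => (1 - Complex.exp (-z)) / z) (𝓝[≠] 0) (𝓝 1) := by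
    have := hdiff.tendsto_slope_zero
    simpa [slope_def_field, div_eq_inv_mul] using this
  have hw0 : Tendsto (fun n : ℕ => p / 2 ^ n) atTop (𝓝 0) := by
    have h2 : Tendsto (fun n : ℕ => ((2 : ℂ)⁻¹) ^ n) atTop (𝓝 0) := by
      apply tendsto_pow_atTop_nhds_zero_of_norm_lt_one
      rw [norm_inv, Complex.norm_ofNat]
      norm_num
    have := h2.const_mul p
    simpa [div_eq_mul_inv, inv_pow] using this
  have hw : Tendsto (fun n : ℕ => p / 2 ^ n) atTop (𝓝[≠] 0) := by
    apply tendsto_nhdsWithin_of_tendsto_nhds_of_eventually_within _ hw0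
    filter_upwards with n
    simp only [Set.mem_compl_iff, Set.mem_singleton_iff]
    exact div_ne_zero hp (pow_ne_zero _ two_ne_zero)
  have hfl : Tendsto f atTop (𝓝 (1 / p)) := by
    have hcomp : Tendsto (fun n : ℕ => (1 - Complex.exp (-(p / 2 ^ n))) / (p / 2 ^ n))
        atTop (𝓝 1) := hslope.comp hw
    have hinv : Tendsto (fun n : ℕ => (p * ((1 - Complex.exp (-(p / 2 ^ n))) / (p / 2 ^ n)))⁻¹)
        atTop (𝓝 p⁻¹) := by
      apply Tendsto.inv₀ _ hp
      simpa using hcomp.const_mul p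
    have heq : ∀ n : ℕ, (p * ((1 - Complex.exp (-(p / 2 ^ n))) / (p / 2 ^ n)))⁻¹ = f n := by
      intro n
      have h2 : (2 : ℂ) ^ n ≠ 0 := pow_ne_zero _ two_ne_zero
      simp only [hf]
      rw [neg_div]
      field_simp
    simp only [heq] at hinv
    simpa [one_div] using hinv
  -- partial sums converge
  have hpartial : Tendsto (fun n : ℕ => ∑ k ∈ range n, a k) atTop
      (𝓝 (1 / (1 - Complex.exp (-p)) - 1 / p)) := by
    have hsum : ∀ n, ∑ k ∈ range n, a k = f 0 - f n := by
      intro n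
      simp only [htel]
      rw [Finset.sum_range_sub']
    simp only [hsum]
    have hf0 : f 0 = 1 / (1 - Complex.exp (-p)) := by simp [hf]
    rw [hf0]
    exact tendsto_const_nhds.sub hfl
  -- summability
  have hsummable : Summable a := by
    have hlim : Tendsto (fun k : ℕ => Complex.exp (-p / 2 ^ (k + 1))) atTop (𝓝 1) := by
      have h2 := hw0.comp (tendsto_add_atTop_nat 1)
      have h3 : Tendsto (fun k : ℕ => -(p / 2 ^ (k + 1))) atTop (𝓝 0) := by
        simpa [Function.comp] using h2.neg
      have := (Complex.continuous_exp.tendsto 0).comp h3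
      simpa [Function.comp_def, neg_div] using this
    have hev : ∀ᶠ k in atTop, (1 : ℝ) ≤ ‖1 + Complex.exp (-p / 2 ^ (k + 1))‖ := by
      have h2 : Tendsto (fun k : ℕ => ‖1 + Complex.exp (-p / 2 ^ (k + 1))‖) atTop (𝓝 2) := by
        have := ((tendsto_const_nhds (x := (1 : ℂ))).add hlim).norm
        have he : ‖(1 : ℂ) + 1‖ = 2 := by norm_num
        rwa [he] at this
      exact h2.eventually (eventually_ge_nhds (by norm_num))
    have hnorm : ∀ᶠ k in atTop, ‖a k‖ ≤ (1 / 2 : ℝ) ^ k := by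
      filter_upwards [hev] with k hk
      have hd0 : (0 : ℝ) < ‖1 + Complex.exp (-p / 2 ^ (k + 1))‖ := lt_of_lt_of_le one_pos hk
      have h1 : ‖(1 / 2 ^ (k + 1) : ℂ)‖ = (1 / 2 : ℝ) ^ (k + 1) := by
        rw [norm_div, norm_pow, Complex.norm_ofNat, norm_one, div_pow, one_pow]
      have hval : ‖a k‖ = (1 / 2 : ℝ) ^ (k + 1) / ‖1 + Complex.exp (-p / 2 ^ (k + 1))‖ := by
        simp only [ha]
        rw [norm_div, h1]
      rw [hval, div_le_iff₀ hd0]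
      have hpk : (0 : ℝ) < (1 / 2 : ℝ) ^ k := by positivity
      calc (1 / 2 : ℝ) ^ (k + 1) ≤ (1 / 2 : ℝ) ^ k * 1 := by
            rw [pow_succ]; nlinarith
        _ ≤ (1 / 2 : ℝ) ^ k * ‖1 + Complex.exp (-p / 2 ^ (k + 1))‖ :=
            mul_le_mul_of_nonneg_left hk (le_of_lt hpk)
    exact Summable.of_norm_bounded_eventually_nat
      (summable_geometric_of_lt_one (by norm_num) (by norm_num)) hnorm
  exact (hsummable.hasSum_iff_tendsto_nat).mpr hpartial
end

section
/- Let β ≠ 0 and s ≠ p be complex numbers. Then 1/(s - p) = -β e^{-βs}/(e^{-βs} - e^{-βp}) + ∑_{k=1}^∞ β 2^{-k} e^{-2^{-k}βs}/(e^{-2^{-k}βs} + e^{-2^{-k}βp}), provided no denominator vanishes, with convergence of the series. -/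
open Filter Finset Topology

theorem dyadic_Cauchy_kernel (β s p : ℂ) (hβ : β ≠ 0) (hps : p ≠ s)
    (h0 : Complex.exp (-β * s) ≠ Complex.exp (-β * p))
    (h : ∀ k : ℕ, 1 ≤ k →
      Complex.exp (-β * s / 2 ^ k) + Complex.exp (-β * p / 2 ^ k) ≠ 0) :
    HasSum
      (fun k : ℕ =>
        β * (1 / 2 ^ (k + 1) : ℂ) * Complex.exp (-β * s / 2 ^ (k + 1))
          / (Complex.exp (-β * s / 2 ^ (k + 1)) + Complex.exp (-β * p / 2 ^ (k + 1))))
      (1 / (s - p) + β * Complex.exp (-β * s) / (Complex.exp (-β * s) - Complex.exp (-β * p))) := by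
  have hsp : s - p ≠ 0 := sub_ne_zero.mpr (Ne.symm hps)
  have h2 : ∀ k : ℕ, ((2:ℂ) ^ k) ≠ 0 := fun k => pow_ne_zero _ two_ne_zero
  set u : ℕ → ℂ := fun k => Complex.exp (-β * s / 2 ^ k) with hu
  set v : ℕ → ℂ := fun k => Complex.exp (-β * p / 2 ^ k) with hv
  have hsq : ∀ (x : ℂ) (k : ℕ),
      Complex.exp (-β * x / 2 ^ (k+1)) ^ 2 = Complex.exp (-β * x / 2 ^ k) := by
    intro x k
    rw [← Complex.exp_nat_mul]
    congr 1
    have := h2 k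
    push_cast
    field_simp
    ring
  have hadd : ∀ k : ℕ, u (k+1) + v (k+1) ≠ 0 := fun k => h (k+1) (Nat.le_add_left 1 k)
  have hne : ∀ k : ℕ, u k - v k ≠ 0 := by
    intro k
    induction k with
    | zero => simpa [hu, hv] using sub_ne_zero.mpr h0
    | succ n ih =>
      have key : u n - v n = (u (n+1) - v (n+1)) * (u (n+1) + v (n+1)) := by
        have e1 := hsq s n
        have e2 := hsq p n
        simp only [hu, hv] at *
        rw [← e1, ← e2]; ring
      intro hz
      exact ih (by rw [key, hz, zero_mul])
  set g : ℕ → ℂ := fun k => β * (1 / 2 ^ k) * u k / (u k - v k) with hg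
  -- telescoping identity
  have htel : ∀ k : ℕ,
      β * (1 / 2 ^ (k + 1) : ℂ) * u (k+1) / (u (k+1) + v (k+1)) = g k - g (k+1) := by
    intro k
    have e1 : u (k+1)^2 = u k := hsq s k
    have e2 : v (k+1)^2 = v k := hsq p k
    have hne' : u (k+1)^2 - v (k+1)^2 ≠ 0 := by rw [e1, e2]; exact hne k
    simp only [hg]
    rw [← e1, ← e2]
    have d1 : u (k+1) - v (k+1) ≠ 0 := hne (k+1)
    have d2 : u (k+1) + v (k+1) ≠ 0 := hadd k
    field_simp [d1, d2]
    ring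
  -- limit of g
  set t : ℕ → ℂ := fun n => 1 / 2 ^ n with ht
  have htne : ∀ n, t n ≠ 0 := fun n => one_div_ne_zero (h2 n)
  have ht0 : Tendsto t atTop (𝓝 0) := by
    have hgeo : Tendsto (fun n : ℕ => ((1:ℂ)/2) ^ n) atTop (𝓝 0) :=
      tendsto_pow_atTop_nhds_zero_of_norm_lt_one (by norm_num)
    simpa [ht, div_pow] using hgeo
  have ht0' : Tendsto t atTop (𝓝[≠] (0:ℂ)) :=
    tendsto_nhdsWithin_of_tendsto_nhds_of_eventually_within _ ht0
      (Filter.Eventually.of_forall fun n => htne n)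
  have hmul : ∀ (x : ℂ) (n : ℕ), -β * x * t n = -β * x / 2 ^ n := by
    intro x n; simp only [ht]; rw [mul_one_div]
  have hlim0 : ∀ x : ℂ, Tendsto (fun n : ℕ => Complex.exp (-β * x / 2 ^ n)) atTop (𝓝 1) := by
    intro x
    have h3 : Tendsto (fun n : ℕ => -β * x / 2 ^ n) atTop (𝓝 0) := by
      have h4 := ht0.const_mul (-β * x)
      rw [mul_zero] at h4
      exact h4.congr fun n => hmul x n
    have h5 := h3.cexp
    rwa [Complex.exp_zero] at h5
  have hu1 : Tendsto u atTop (𝓝 1) := hlim0 s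
  have hv1 : Tendsto v atTop (𝓝 1) := hlim0 p
  have hF : HasDerivAt (fun z : ℂ => Complex.exp (-β * s * z) - Complex.exp (-β * p * z))
      (β * (p - s)) 0 := by
    have ha : HasDerivAt (fun z : ℂ => Complex.exp (-β * s * z)) (-β * s) 0 := by
      have := ((hasDerivAt_id (0:ℂ)).const_mul (-β * s)).cexp
      simpa using this
    have hb : HasDerivAt (fun z : ℂ => Complex.exp (-β * p * z)) (-β * p) 0 := by
      have := ((hasDerivAt_id (0:ℂ)).const_mul (-β * p)).cexp
      simpa using this
    have : HasDerivAt (fun z : ℂ => Complex.exp (-β * s * z) - Complex.exp (-β * p * z))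
        (-β * s - -β * p) 0 := ha.sub hb
    convert this using 1
    ring
  have hslope : Tendsto (fun n => (u n - v n) / t n) atTop (𝓝 (β * (p - s))) := by
    have := (hasDerivAt_iff_tendsto_slope.mp hF).comp ht0'
    have heq : ∀ n : ℕ, slope (fun z : ℂ => Complex.exp (-β * s * z) - Complex.exp (-β * p * z))
        0 (t n) = (u n - v n) / t n := by
      intro n
      rw [slope_def_field, sub_zero]
      simp only [hu, hv, mul_zero, Complex.exp_zero, sub_self, sub_zero, hmul s n, hmul p n]
    exact (this.congr heq)
  have hβps : β * (p - s) ≠ 0 := mul_ne_zero hβ (sub_ne_zero.mpr hps)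
  have hglim : Tendsto g atTop (𝓝 (1 / (p - s))) := by
    have hmain : Tendsto (fun n => β * u n / ((u n - v n) / t n)) atTop
        (𝓝 ((β * 1) / (β * (p - s)))) := (hu1.const_mul β).div hslope hβps
    have hval : (β * 1) / (β * (p - s)) = 1 / (p - s) := mul_div_mul_left _ _ hβ
    rw [hval] at hmain
    refine hmain.congr fun n => ?_
    rw [div_div_eq_mul_div]
    simp only [hg, ht]
    ring
  -- summability
  have hr : Tendsto (fun k => u (k+1) / (u (k+1) + v (k+1))) atTop (𝓝 (1 / (1 + 1))) := by
    have hu1' : Tendsto (fun k => u (k+1)) atTop (𝓝 1) := hu1.comp (tendsto_add_atTop_nat 1)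
    have hv1' : Tendsto (fun k => v (k+1)) atTop (𝓝 1) := hv1.comp (tendsto_add_atTop_nat 1)
    exact hu1'.div (hu1'.add hv1') (by norm_num)
  obtain ⟨C, hC⟩ := bddAbove_def.mp hr.norm.bddAbove_range
  have hC' : ∀ k : ℕ, ‖u (k+1) / (u (k+1) + v (k+1))‖ ≤ C := fun k =>
    hC _ ⟨k, rfl⟩
  have hC0 : 0 ≤ C := le_trans (norm_nonneg _) (hC' 0)
  have hsumm : Summable (fun k : ℕ =>
      β * (1 / 2 ^ (k + 1) : ℂ) * Complex.exp (-β * s / 2 ^ (k + 1))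
        / (Complex.exp (-β * s / 2 ^ (k + 1)) + Complex.exp (-β * p / 2 ^ (k + 1)))) := by
    apply Summable.of_norm_bounded (g := fun k => (‖β‖ * C) * (1/2:ℝ) ^ k)
      ((summable_geometric_of_lt_one (by norm_num) (by norm_num)).mul_left _)
    intro k
    have hnorm : ‖β * (1 / 2 ^ (k + 1) : ℂ) * Complex.exp (-β * s / 2 ^ (k + 1))
        / (Complex.exp (-β * s / 2 ^ (k + 1)) + Complex.exp (-β * p / 2 ^ (k + 1)))‖
        = ‖β‖ * (1/2:ℝ) ^ (k+1) * ‖u (k+1) / (u (k+1) + v (k+1))‖ := by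
      have c1 : ‖(1 / 2 ^ (k+1) : ℂ)‖ = (1/2:ℝ) ^ (k+1) := by
        simp [norm_div, norm_pow]
      rw [mul_div_assoc, norm_mul, norm_mul, c1]
    rw [hnorm]
    have hb0 : (0:ℝ) ≤ ‖β‖ := norm_nonneg _
    have hp0 : (0:ℝ) ≤ (1/2:ℝ) ^ k := by positivity
    have hrk := hC' k
    have hrk0 : (0:ℝ) ≤ ‖u (k+1) / (u (k+1) + v (k+1))‖ := norm_nonneg _
    have hps1 : ((1:ℝ)/2) ^ (k+1) = (1/2:ℝ) ^ k * (1/2) := pow_succ _ _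
    calc ‖β‖ * (1/2:ℝ) ^ (k+1) * ‖u (k+1) / (u (k+1) + v (k+1))‖
        ≤ ‖β‖ * (1/2:ℝ) ^ (k+1) * C := by
          apply mul_le_mul_of_nonneg_left hrk (by positivity)
      _ ≤ ‖β‖ * C * (1/2:ℝ) ^ k := by
          rw [hps1]
          nlinarith [mul_nonneg (mul_nonneg hb0 hC0) hp0]
  rw [Summable.hasSum_iff_tendsto_nat hsumm]
  have hsum' : ∀ n : ℕ, (∑ i ∈ Finset.range n,
      β * (1 / 2 ^ (i + 1) : ℂ) * Complex.exp (-β * s / 2 ^ (i + 1))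
        / (Complex.exp (-β * s / 2 ^ (i + 1)) + Complex.exp (-β * p / 2 ^ (i + 1))))
      = g 0 - g n := by
    intro n
    rw [← Finset.sum_range_sub' g n]
    exact Finset.sum_congr rfl fun i _ => htel i
  have key : (1 / (s - p) + β * Complex.exp (-β * s)
      / (Complex.exp (-β * s) - Complex.exp (-β * p))) = g 0 - 1 / (p - s) := by
    have hg0 : g 0 = β * Complex.exp (-β * s)
        / (Complex.exp (-β * s) - Complex.exp (-β * p)) := by
      simp [hg, hu, hv]
    rw [hg0]
    have hps2 : p - s ≠ 0 := sub_ne_zero.mpr hps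
    have hneg : (1:ℂ) / (s - p) = -(1 / (p - s)) := by
      field_simp
      ring
    rw [hneg]
    ring
  rw [key]
  exact Filter.Tendsto.congr (fun n => (hsum' n).symm) (tendsto_const_nhds.sub hglim)
end

section
/- For real x > 0, Ψ(x+1) - ln x = ∑_{k=1}^∞ ∫_0^∞ e^{-q(1 + 2^k x)}/(1 + e^{-q}) dq, with the series of integrals converging. -/
open MeasureTheory

noncomputable def digammaR (x : ℝ) : ℝ := deriv Real.Gamma x / Real.Gamma x

namespace DyadicAux

open Real Set Filter Topology

noncomputable def g (p : ℝ) : ℝ := 1 / p - 1 / (Real.exp p - 1)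

lemma exp_sub_one_pos {p : ℝ} (hp : 0 < p) : 0 < Real.exp p - 1 := by
  have := Real.add_one_le_exp p; linarith

lemma g_nonneg {p : ℝ} (hp : 0 < p) : 0 ≤ g p := by
  have h1 := Real.add_one_le_exp p
  have h2 : 0 < Real.exp p - 1 := exp_sub_one_pos hp
  have : 1 / (Real.exp p - 1) ≤ 1 / p := by
    apply one_div_le_one_div_of_le hp; linarith
  simpa [g, sub_nonneg] using this

lemma g_le_one {p : ℝ} (hp : 0 < p) : g p ≤ 1 := by
  have h2 : 0 < Real.exp p - 1 := exp_sub_one_pos hp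
  have h1 : 1 - p ≤ Real.exp (-p) := by have := Real.add_one_le_exp (-p); linarith
  have h3 : Real.exp p * (1 - p) ≤ 1 := by
    calc Real.exp p * (1 - p) ≤ Real.exp p * Real.exp (-p) :=
          mul_le_mul_of_nonneg_left h1 (Real.exp_pos p).le
      _ = 1 := by rw [← Real.exp_add]; simp
  rw [g, div_sub_div _ _ hp.ne' h2.ne', div_le_one (by positivity)]
  nlinarith [Real.exp_pos p]

lemma g_rec {p : ℝ} (hp : 0 < p) : g p = 2⁻¹ * (Real.exp (p / 2) + 1)⁻¹ + 2⁻¹ * g (p / 2) := by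
  have hs : 0 < p / 2 := by linarith
  have hE1 : 0 < Real.exp (p / 2) - 1 := exp_sub_one_pos hs
  have hE2 : 0 < Real.exp (p / 2) + 1 := by positivity
  have hexp : Real.exp p = Real.exp (p / 2) * Real.exp (p / 2) := by
    rw [← Real.exp_add]; ring_nf
  have hden : 0 < Real.exp p - 1 := exp_sub_one_pos hp
  rw [g, g, hexp]
  have h0 : Real.exp (p/2) * Real.exp (p/2) - 1 = (Real.exp (p/2) - 1) * (Real.exp (p/2) + 1) := by ring
  rw [h0]
  field_simp
  ring

lemma g_sum {p : ℝ} (hp : 0 < p) (K : ℕ) :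
    ∑ k ∈ Finset.range K, (2 : ℝ)⁻¹ ^ (k + 1) * (Real.exp (p * 2⁻¹ ^ (k + 1)) + 1)⁻¹
      = g p - 2⁻¹ ^ K * g (p * 2⁻¹ ^ K) := by
  induction K with
  | zero => simp
  | succ K ih =>
    rw [Finset.sum_range_succ, ih]
    have hpK : 0 < p * (2 : ℝ)⁻¹ ^ K := by positivity
    have := g_rec hpK
    have h2 : p * (2:ℝ)⁻¹ ^ K / 2 = p * 2⁻¹ ^ (K + 1) := by ring
    rw [h2] at this
    rw [this]
    ring

lemma expIntegrable {x : ℝ} (hx : 0 < x) :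
    IntegrableOn (fun p : ℝ => Real.exp (-(x * p))) (Ioi 0) := by
  simpa [neg_mul] using exp_neg_integrableOn_Ioi 0 hx

lemma integral_exp_neg_mul {x : ℝ} (hx : 0 < x) :
    ∫ p in Ioi (0 : ℝ), Real.exp (-(x * p)) = x⁻¹ := by
  have h := integral_comp_mul_left_Ioi (fun q => Real.exp (-q)) 0 hx
  simp only [mul_zero, integral_exp_neg_Ioi, neg_zero, Real.exp_zero, smul_eq_mul, mul_one] at h
  simpa using h

lemma g_measurable : Measurable g := by
  unfold g; fun_prop

/-- integrability of exp(-xp) * h p when 0 ≤ h ≤ 1 on Ioi 0 -/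
lemma integrable_of_le_one {x : ℝ} (hx : 0 < x) {h : ℝ → ℝ} (hm : Measurable h)
    (h0 : ∀ p : ℝ, 0 < p → 0 ≤ h p) (h1 : ∀ p : ℝ, 0 < p → h p ≤ 1) :
    IntegrableOn (fun p : ℝ => Real.exp (-(x * p)) * h p) (Ioi 0) := by
  refine Integrable.mono' (expIntegrable hx) ?_ ?_
  · exact (measurable_const.mul measurable_id').neg.exp.mul hm |>.aestronglyMeasurable
  · rw [ae_restrict_iff' measurableSet_Ioi]
    filter_upwards with p hp
    rw [Real.norm_eq_abs, abs_mul, abs_of_nonneg (Real.exp_pos _).le, abs_of_nonneg (h0 p hp)]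
    nlinarith [Real.exp_pos (-(x*p)), h1 p hp, h0 p hp]

lemma integral_le_inv {x : ℝ} (hx : 0 < x) {h : ℝ → ℝ} (hm : Measurable h)
    (h0 : ∀ p : ℝ, 0 < p → 0 ≤ h p) (h1 : ∀ p : ℝ, 0 < p → h p ≤ 1) :
    (∫ p in Ioi (0:ℝ), Real.exp (-(x * p)) * h p) ≤ x⁻¹ := by
  rw [← integral_exp_neg_mul hx]
  apply setIntegral_mono_on (integrable_of_le_one hx hm h0 h1) (expIntegrable hx) measurableSet_Ioi
  intro p hp
  nlinarith [Real.exp_pos (-(x*p)), h1 p hp, h0 p hp]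

lemma integral_nonneg_of {h : ℝ → ℝ} (h0 : ∀ p : ℝ, 0 < p → 0 ≤ h p) :
    0 ≤ ∫ p in Ioi (0:ℝ), Real.exp (-(x * p)) * h p := by
  apply setIntegral_nonneg measurableSet_Ioi
  intro p hp
  exact mul_nonneg (Real.exp_pos _).le (h0 p hp)

noncomputable def G (x : ℝ) : ℝ := ∫ p in Ioi (0:ℝ), Real.exp (-(x * p)) * g p

lemma hk_mble (k : ℕ) : Measurable (fun p : ℝ => (2:ℝ)⁻¹^(k+1) * (Real.exp (p * 2⁻¹^(k+1)) + 1)⁻¹) := by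
  fun_prop

lemma hk_nonneg (k : ℕ) (p : ℝ) (hp : 0 < p) :
    0 ≤ (2:ℝ)⁻¹^(k+1) * (Real.exp (p * 2⁻¹^(k+1)) + 1)⁻¹ := by positivity

lemma hk_le_one (k : ℕ) (p : ℝ) (hp : 0 < p) :
    (2:ℝ)⁻¹^(k+1) * (Real.exp (p * 2⁻¹^(k+1)) + 1)⁻¹ ≤ 1 := by
  have h1 : ((2:ℝ)⁻¹)^(k+1) ≤ 1 := by
    apply pow_le_one₀ <;> norm_num
  have h2 : (Real.exp (p * 2⁻¹^(k+1)) + 1)⁻¹ ≤ 1 := by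
    rw [inv_le_one_iff₀]; right; nlinarith [Real.exp_pos (p * (2:ℝ)⁻¹^(k+1))]
  calc (2:ℝ)⁻¹^(k+1) * (Real.exp (p * 2⁻¹^(k+1)) + 1)⁻¹ ≤ 1 * 1 :=
        mul_le_mul h1 h2 (by positivity) one_pos.le
    _ = 1 := mul_one 1

lemma Ik_eq {x : ℝ} (hx : 0 < x) (k : ℕ) :
    (∫ q in Ioi (0:ℝ), Real.exp (-q * (1 + 2 ^ (k+1) * x)) / (1 + Real.exp (-q)))
      = ∫ p in Ioi (0:ℝ), Real.exp (-(x * p)) * ((2:ℝ)⁻¹^(k+1) * (Real.exp (p * 2⁻¹^(k+1)) + 1)⁻¹) := by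
  set b : ℝ := (2:ℝ)⁻¹^(k+1) with hb_def
  have hb : 0 < b := by positivity
  have hb2 : ((2:ℝ))^(k+1) * b = 1 := by
    rw [hb_def, ← mul_pow]; norm_num
  set F : ℝ → ℝ := fun q => Real.exp (-q * (1 + 2 ^ (k+1) * x)) / (1 + Real.exp (-q)) with hF
  have hchange := integral_comp_mul_left_Ioi F 0 hb
  rw [mul_zero] at hchange
  have key : ∀ p : ℝ, F (b * p) = Real.exp (-(x * p)) * (Real.exp (p * b) + 1)⁻¹ := by
    intro p
    have e1 : -(b * p) * (1 + 2 ^ (k+1) * x) = -(b * p) + -(x * p) := by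
      have : (2:ℝ)^(k+1) * x * (b * p) = x * p := by
        calc (2:ℝ)^(k+1) * x * (b * p) = ((2:ℝ)^(k+1) * b) * (x * p) := by ring
          _ = x * p := by rw [hb2]; ring
      nlinarith [this]
    rw [hF]
    simp only []
    rw [e1, Real.exp_add]
    have hE : (0:ℝ) < Real.exp (b * p) := Real.exp_pos _
    rw [Real.exp_neg (b*p)]
    rw [show p * b = b * p by ring]
    field_simp
  have : (∫ p in Ioi (0:ℝ), F (b * p)) = ∫ p in Ioi (0:ℝ), Real.exp (-(x * p)) * (Real.exp (p * b) + 1)⁻¹ := by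
    congr 1; funext p; exact key p
  rw [this] at hchange
  have hgoal : (∫ q in Ioi (0:ℝ), F q) = b • ∫ p in Ioi (0:ℝ), Real.exp (-(x * p)) * (Real.exp (p * b) + 1)⁻¹ := by
    rw [hchange, smul_smul, mul_inv_cancel₀ hb.ne', one_smul]
  rw [hF] at hgoal
  rw [hgoal, smul_eq_mul, ← integral_const_mul]
  congr 1; funext p; ring

lemma partial_sum {x : ℝ} (hx : 0 < x) (K : ℕ) :
    ∑ k ∈ Finset.range K, (∫ q in Ioi (0:ℝ), Real.exp (-q * (1 + 2 ^ (k+1) * x)) / (1 + Real.exp (-q)))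
      = G x - 2⁻¹^K * ∫ p in Ioi (0:ℝ), Real.exp (-(x * p)) * g (p * 2⁻¹^K) := by
  have h1 : ∀ k ∈ Finset.range K, (∫ q in Ioi (0:ℝ), Real.exp (-q * (1 + 2 ^ (k+1) * x)) / (1 + Real.exp (-q)))
      = ∫ p in Ioi (0:ℝ), Real.exp (-(x * p)) * ((2:ℝ)⁻¹^(k+1) * (Real.exp (p * 2⁻¹^(k+1)) + 1)⁻¹) :=
    fun k _ => Ik_eq hx k
  rw [Finset.sum_congr rfl h1, ← integral_finset_sum _
    (fun k _ => integrable_of_le_one hx (hk_mble k) (hk_nonneg k) (hk_le_one k))]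
  have h2 : ∀ p ∈ Ioi (0:ℝ),
      (∑ k ∈ Finset.range K, Real.exp (-(x * p)) * ((2:ℝ)⁻¹^(k+1) * (Real.exp (p * 2⁻¹^(k+1)) + 1)⁻¹))
        = Real.exp (-(x * p)) * g p - 2⁻¹^K * (Real.exp (-(x * p)) * g (p * 2⁻¹^K)) := by
    intro p hp
    rw [← Finset.mul_sum, g_sum (mem_Ioi.mp hp) K]
    ring
  rw [setIntegral_congr_fun measurableSet_Ioi h2]
  have hg1 : IntegrableOn (fun p : ℝ => Real.exp (-(x * p)) * g p) (Ioi 0) :=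
    integrable_of_le_one hx g_measurable (fun p hp => g_nonneg hp) (fun p hp => g_le_one hp)
  have hg2 : IntegrableOn (fun p : ℝ => Real.exp (-(x * p)) * g (p * 2⁻¹^K)) (Ioi 0) := by
    apply integrable_of_le_one hx (g_measurable.comp (measurable_id'.mul_const _))
    · intro p hp; exact g_nonneg (by positivity)
    · intro p hp; exact g_le_one (by positivity)
  rw [integral_sub hg1 (hg2.const_mul _), integral_const_mul]
  rfl

lemma hasSum_G {x : ℝ} (hx : 0 < x) :
    HasSum (fun k : ℕ => ∫ q in Ioi (0:ℝ), Real.exp (-q * (1 + 2 ^ (k+1) * x)) / (1 + Real.exp (-q))) (G x) := by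
  rw [hasSum_iff_tendsto_nat_of_nonneg]
  · have heq : (fun n : ℕ => ∑ k ∈ Finset.range n,
        ∫ q in Ioi (0:ℝ), Real.exp (-q * (1 + 2 ^ (k+1) * x)) / (1 + Real.exp (-q)))
        = fun n : ℕ => G x - 2⁻¹^n * ∫ p in Ioi (0:ℝ), Real.exp (-(x * p)) * g (p * 2⁻¹^n) := by
      funext n; exact partial_sum hx n
    rw [heq]
    have htend : Tendsto (fun n : ℕ => (2:ℝ)⁻¹^n * ∫ p in Ioi (0:ℝ), Real.exp (-(x * p)) * g (p * 2⁻¹^n)) atTop (𝓝 0) := by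
      apply squeeze_zero (fun n => ?_) (fun n => ?_)
        (g := fun n : ℕ => (2:ℝ)⁻¹^n * x⁻¹)
      · have := tendsto_pow_atTop_nhds_zero_of_lt_one (by norm_num : (0:ℝ) ≤ 2⁻¹) (by norm_num : (2:ℝ)⁻¹ < 1)
        simpa using this.mul_const x⁻¹
      · exact mul_nonneg (by positivity) (integral_nonneg_of (fun p hp => g_nonneg (by positivity)))
      · apply mul_le_mul_of_nonneg_left _ (by positivity)
        exact integral_le_inv hx (g_measurable.comp (measurable_id'.mul_const _))
          (fun p hp => g_nonneg (by positivity)) (fun p hp => g_le_one (by positivity))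
    have := (tendsto_const_nhds (x := G x) (f := atTop (α := ℕ))).sub htend
    simpa using this
  · intro k
    apply setIntegral_nonneg measurableSet_Ioi
    intro p hp
    positivity

lemma Gamma_hasDerivAt {y : ℝ} (hy : 0 < y) : HasDerivAt Real.Gamma (deriv Real.Gamma y) y := by
  refine (Real.differentiableAt_Gamma fun m => ?_).hasDerivAt
  have h : -(m:ℝ) ≤ 0 := neg_nonpos.mpr (Nat.cast_nonneg m)
  exact ne_of_gt (lt_of_le_of_lt h hy)

lemma logGamma_hasDerivAt {y : ℝ} (hy : 0 < y) :
    HasDerivAt (Real.log ∘ Real.Gamma) (digammaR y) y :=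
  (Gamma_hasDerivAt hy).log (Real.Gamma_pos_of_pos hy).ne'

lemma digamma_add_one {y : ℝ} (hy : 0 < y) : digammaR (y + 1) = digammaR y + 1 / y := by
  have hΓ := Real.Gamma_pos_of_pos hy
  have h1 : HasDerivAt (fun t : ℝ => Real.Gamma (t + 1)) (deriv Real.Gamma (y + 1) * 1) y :=
    HasDerivAt.comp (h₂ := Real.Gamma) y (Gamma_hasDerivAt (by linarith : (0:ℝ) < y + 1)) ((hasDerivAt_id y).add_const 1)
  have h2 : HasDerivAt (fun t : ℝ => t * Real.Gamma t)
      (1 * Real.Gamma y + y * deriv Real.Gamma y) y :=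
    (hasDerivAt_id y).mul (Gamma_hasDerivAt hy)
  have heq : (fun t : ℝ => t * Real.Gamma t) =ᶠ[𝓝 y] (fun t : ℝ => Real.Gamma (t + 1)) := by
    filter_upwards [eventually_gt_nhds hy] with t ht
    exact (Real.Gamma_add_one ht.ne').symm
  have h3 : HasDerivAt (fun t : ℝ => Real.Gamma (t + 1))
      (1 * Real.Gamma y + y * deriv Real.Gamma y) y := h2.congr_of_eventuallyEq heq.symm
  have huniq : deriv Real.Gamma (y + 1) * 1 = 1 * Real.Gamma y + y * deriv Real.Gamma y :=
    h1.unique h3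
  have hΓ1 : Real.Gamma (y + 1) = y * Real.Gamma y := Real.Gamma_add_one hy.ne'
  rw [digammaR, digammaR, hΓ1]
  field_simp
  linear_combination huniq

lemma digamma_le_log {y : ℝ} (hy : 0 < y) : digammaR y ≤ Real.log y := by
  have hs : slope (Real.log ∘ Real.Gamma) y (y + 1) = Real.log y := by
    have : (Real.log ∘ Real.Gamma) (y + 1) = Real.log y + Real.log (Real.Gamma y) := by
      simp only [Function.comp_apply, Real.Gamma_add_one hy.ne',
        Real.log_mul hy.ne' (Real.Gamma_pos_of_pos hy).ne']
    rw [slope_def_field, this]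
    simp [Function.comp]
  rw [← hs, ← (logGamma_hasDerivAt hy).deriv]
  exact Real.convexOn_log_Gamma.deriv_le_slope (mem_Ioi.mpr hy)
    (mem_Ioi.mpr (by linarith)) (by linarith)
    (logGamma_hasDerivAt hy).differentiableAt

lemma log_le_digamma {y : ℝ} (hy : 0 < y) : Real.log y ≤ digammaR (y + 1) := by
  have hs : slope (Real.log ∘ Real.Gamma) y (y + 1) = Real.log y := by
    have : (Real.log ∘ Real.Gamma) (y + 1) = Real.log y + Real.log (Real.Gamma y) := by
      simp only [Function.comp_apply, Real.Gamma_add_one hy.ne',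
        Real.log_mul hy.ne' (Real.Gamma_pos_of_pos hy).ne']
    rw [slope_def_field, this]
    simp [Function.comp]
  rw [← hs, ← (logGamma_hasDerivAt (by linarith : (0:ℝ) < y + 1)).deriv]
  exact Real.convexOn_log_Gamma.slope_le_deriv (mem_Ioi.mpr hy)
    (mem_Ioi.mpr (by linarith)) (by linarith)
    (logGamma_hasDerivAt (by linarith)).differentiableAt

lemma digamma_sub_log_bounds {y : ℝ} (hy : 0 < y) :
    0 ≤ digammaR (y + 1) - Real.log y ∧ digammaR (y + 1) - Real.log y ≤ 1 / y := by
  constructor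
  · linarith [log_le_digamma hy]
  · have := digamma_le_log hy
    have h2 := digamma_add_one hy
    linarith

lemma inner_formula {a b p : ℝ} (hab : a ≤ b) (hp : 0 < p) :
    ∫ t in Ioc a b, Real.exp (-(t * p)) = (Real.exp (-(a * p)) - Real.exp (-(b * p))) / p := by
  rw [← intervalIntegral.integral_of_le hab]
  have h1 : ∀ t : ℝ, Real.exp (-(t * p)) = Real.exp (t * -p) := by intro t; ring_nf
  simp_rw [h1]
  rw [intervalIntegral.integral_comp_mul_right (fun u => Real.exp u) (by linarith : -p ≠ 0)]
  rw [integral_exp, smul_eq_mul]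
  have e1 : b * -p = -(b * p) := by ring
  have e2 : a * -p = -(a * p) := by ring
  rw [e1, e2, inv_neg]
  field_simp
  ring

lemma prod_integrable {a b : ℝ} (ha : 0 < a) (hab : a ≤ b) :
    Integrable (Function.uncurry fun p t => Real.exp (-(t * p)))
      ((volume.restrict (Ioi (0:ℝ))).prod (volume.restrict (Ioc a b))) := by
  have hmaj : Integrable (fun z : ℝ × ℝ => Real.exp (-(a * z.1)) * 1)
      ((volume.restrict (Ioi (0:ℝ))).prod (volume.restrict (Ioc a b))) := by
    exact Integrable.mul_prod (L := ℝ) (expIntegrable ha)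
      (integrable_const (c := (1:ℝ)) (μ := volume.restrict (Ioc a b)))
  refine hmaj.mono' ?_ ?_
  · apply Continuous.aestronglyMeasurable
    fun_prop
  · rw [Measure.prod_restrict, ae_restrict_iff' (measurableSet_Ioi.prod measurableSet_Ioc)]
    filter_upwards with z hz
    obtain ⟨hz1, hz2⟩ := hz
    simp only [Function.uncurry, Real.norm_eq_abs, abs_of_nonneg (Real.exp_pos _).le, mul_one]
    apply Real.exp_le_exp.mpr
    have : (0:ℝ) < z.1 := hz1
    nlinarith [hz2.1]

lemma frullani_exp {a b : ℝ} (ha : 0 < a) (hab : a < b) :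
    ∫ p in Ioi (0:ℝ), (Real.exp (-(a * p)) - Real.exp (-(b * p))) / p
      = Real.log b - Real.log a := by
  have hb : 0 < b := lt_trans ha hab
  have hswap := integral_integral_swap (prod_integrable ha hab.le)
  have hL : (∫ p in Ioi (0:ℝ), ∫ t in Ioc a b, Real.exp (-(t * p)))
      = ∫ p in Ioi (0:ℝ), (Real.exp (-(a * p)) - Real.exp (-(b * p))) / p := by
    apply setIntegral_congr_fun measurableSet_Ioi
    intro p hp
    exact inner_formula hab.le (mem_Ioi.mp hp)
  have hR : (∫ t in Ioc a b, ∫ p in Ioi (0:ℝ), Real.exp (-(t * p)))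
      = ∫ t in Ioc a b, t⁻¹ := by
    apply setIntegral_congr_fun measurableSet_Ioc
    intro t ht
    have ht0 : 0 < t := lt_of_lt_of_le ha ht.1.le
    have h1 : ∀ p : ℝ, Real.exp (-(t * p)) = Real.exp (-(t * p)) := fun _ => rfl
    exact integral_exp_neg_mul ht0
  have hinv : (∫ t in Ioc a b, t⁻¹) = Real.log b - Real.log a := by
    rw [← intervalIntegral.integral_of_le hab.le, integral_inv_of_pos ha hb,
      Real.log_div hb.ne' ha.ne']
  rw [← hL, hswap, hR, hinv]

lemma gIntegrable {x : ℝ} (hx : 0 < x) :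
    IntegrableOn (fun p : ℝ => Real.exp (-(x * p)) * g p) (Ioi 0) :=
  integrable_of_le_one hx g_measurable (fun _ hp => g_nonneg hp) (fun _ hp => g_le_one hp)

lemma G_nonneg {x : ℝ} : 0 ≤ G x := integral_nonneg_of (fun _ hp => g_nonneg hp)

lemma G_le {x : ℝ} (hx : 0 < x) : G x ≤ x⁻¹ :=
  integral_le_inv hx g_measurable (fun _ hp => g_nonneg hp) (fun _ hp => g_le_one hp)

lemma G_sub {x : ℝ} (hx : 0 < x) :
    G x - G (x + 1) = (Real.log (x + 1) - Real.log x) - (x + 1)⁻¹ := by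
  have hx1 : (0:ℝ) < x + 1 := by linarith
  set h : ℝ → ℝ := fun p => (1 - Real.exp (-p)) / p with hh
  have hm : Measurable h := by unfold h; fun_prop
  have h0 : ∀ p : ℝ, 0 < p → 0 ≤ h p := by
    intro p hp
    have : Real.exp (-p) ≤ 1 := by
      rw [Real.exp_le_one_iff]; linarith
    unfold h
    apply div_nonneg (by linarith) hp.le
  have h1 : ∀ p : ℝ, 0 < p → h p ≤ 1 := by
    intro p hp
    have hb : 1 - p ≤ Real.exp (-p) := by have := Real.add_one_le_exp (-p); linarith
    unfold h
    rw [div_le_one hp]; linarith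
  have hC : IntegrableOn (fun p : ℝ => Real.exp (-(x * p)) * h p) (Ioi 0) :=
    integrable_of_le_one hx hm h0 h1
  have step1 : G x - G (x + 1)
      = ∫ p in Ioi (0:ℝ), (Real.exp (-(x * p)) * g p - Real.exp (-((x+1) * p)) * g p) := by
    rw [G, G, ← integral_sub (gIntegrable hx) (gIntegrable hx1)]
  have step2 : ∀ p ∈ Ioi (0:ℝ),
      Real.exp (-(x * p)) * g p - Real.exp (-((x+1) * p)) * g p
        = Real.exp (-(x * p)) * h p - Real.exp (-((x+1) * p)) := by
    intro p hp
    have hp0 : (0:ℝ) < p := hp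
    have hE : 0 < Real.exp p - 1 := exp_sub_one_pos hp0
    have key : Real.exp (-((x+1) * p)) = Real.exp (-(x * p)) * Real.exp (-p) := by
      rw [← Real.exp_add]; ring_nf
    have hinv : Real.exp (-p) = (Real.exp p)⁻¹ := Real.exp_neg p
    rw [key, g, hh]
    simp only [hinv]
    have hep : Real.exp p ≠ 0 := (Real.exp_pos p).ne'
    field_simp
  rw [step1, setIntegral_congr_fun measurableSet_Ioi step2,
    integral_sub hC (expIntegrable hx1), integral_exp_neg_mul hx1]
  have hfr : (∫ p in Ioi (0:ℝ), Real.exp (-(x * p)) * h p)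
      = Real.log (x+1) - Real.log x := by
    rw [← frullani_exp hx (by linarith : x < x + 1)]
    congr 1; funext p
    unfold h
    have key : Real.exp (-((x+1) * p)) = Real.exp (-(x * p)) * Real.exp (-p) := by
      rw [← Real.exp_add]; ring_nf
    rw [key]; ring
  rw [hfr]

end DyadicAux

open DyadicAux Real Set Filter Topology in
theorem digamma_dyadic_integral_series (x : ℝ) (hx : 0 < x) :
    HasSum
      (fun k : ℕ =>
        ∫ q in Set.Ioi (0 : ℝ), Real.exp (-q * (1 + 2 ^ (k + 1) * x)) / (1 + Real.exp (-q)))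
      (digammaR (x + 1) - Real.log x) := by
  have main : G x = digammaR (x + 1) - Real.log x := by
    set D : ℝ → ℝ := fun y => digammaR (y + 1) - Real.log y - G y with hD
    have step : ∀ y : ℝ, 0 < y → D y = D (y + 1) := by
      intro y hy
      have h1 : digammaR (y + 1 + 1) = digammaR (y + 1) + 1 / (y + 1) :=
        digamma_add_one (by linarith)
      have h2 := G_sub hy
      simp only [hD]
      have : (y+1)⁻¹ = 1/(y+1) := (one_div _).symm
      linarith [h2, h1]
    have iter : ∀ n : ℕ, D x = D (x + n) := by
      intro n
      induction n with
      | zero => simp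
      | succ n ih =>
        rw [ih, step (x + n) (by positivity)]
        congr 1
        push_cast
        ring
    have bound : ∀ y : ℝ, 0 < y → |D y| ≤ 1 / y := by
      intro y hy
      obtain ⟨b1, b2⟩ := digamma_sub_log_bounds hy
      have b3 := G_nonneg (x := y)
      have b4 := G_le hy
      rw [hD, abs_le]
      constructor
      · simp only []
        rw [one_div] at *
        linarith
      · simp only []
        rw [one_div] at *
        linarith
    have hDx : ∀ n : ℕ, |D x| ≤ 1 / (x + n) := by
      intro n
      rw [iter n]
      exact bound _ (by positivity)
    have htend : Tendsto (fun n : ℕ => 1 / (x + n)) atTop (𝓝 0) := by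
      simp only [one_div]
      exact (tendsto_atTop_add_const_left atTop x
        tendsto_natCast_atTop_atTop).inv_tendsto_atTop
    have : |D x| ≤ 0 := ge_of_tendsto' htend hDx |>.trans_eq rfl
    have hD0 : D x = 0 := abs_eq_zero.mp (le_antisymm this (abs_nonneg _))
    rw [hD] at hD0
    simp only [] at hD0
    linarith
  rw [← main]
  exact hasSum_G hx
end

section
/- For p > 0 real, 1/p - 1/(e^p - 1) = ∑_{k=1}^∞ e^{-p/2^k} / (2^k (e^{-p/2^k} + 1)), with the series converging. -/
theorem dyadic_real_identity (p : ℝ) (hp : 0 < p) :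
    HasSum
      (fun k : ℕ =>
        Real.exp (-p / 2 ^ (k + 1)) / (2 ^ (k + 1) * (Real.exp (-p / 2 ^ (k + 1)) + 1)))
      (1 / p - 1 / (Real.exp p - 1)) := by
  set f : ℕ → ℝ := fun k =>
    Real.exp (-p / 2 ^ (k + 1)) / (2 ^ (k + 1) * (Real.exp (-p / 2 ^ (k + 1)) + 1)) with hf
  set a : ℕ → ℝ := fun k => 1 / (2 ^ k * (Real.exp (p / 2 ^ k) - 1)) with ha
  have hexp_gt : ∀ k : ℕ, 1 < Real.exp (p / 2 ^ k) := by
    intro k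
    have := Real.exp_lt_exp.mpr (show (0:ℝ) < p / 2 ^ k by positivity)
    simpa using this
  have key : ∀ k : ℕ, f k = a (k + 1) - a k := by
    intro k
    have hsq : Real.exp (p / 2 ^ k) = Real.exp (p / 2 ^ (k + 1)) * Real.exp (p / 2 ^ (k + 1)) := by
      rw [← Real.exp_add]
      ring_nf
    have hneg : Real.exp (-p / 2 ^ (k + 1)) = (Real.exp (p / 2 ^ (k + 1)))⁻¹ := by
      rw [← Real.exp_neg]; ring_nf
    have hy := hexp_gt (k + 1)
    set y := Real.exp (p / 2 ^ (k + 1))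
    have hy0 : 0 < y := by linarith
    simp only [hf, ha, hsq, hneg]
    have h1 : y - 1 ≠ 0 := by nlinarith
    have h2 : y + 1 ≠ 0 := by nlinarith
    have h3 : y * y - 1 ≠ 0 := by nlinarith
    have h4 : (2:ℝ) ^ (k+1) = 2 * 2 ^ k := by ring
    rw [show Real.exp (p / 2 ^ (k + 1)) = y from rfl]
    have h5 : y ^ 2 - 1 ≠ 0 := by nlinarith
    clear_value y
    field_simp
    ring
  have hpos : ∀ k : ℕ, 0 ≤ f k := by
    intro k
    have : (0:ℝ) < Real.exp (-p / 2 ^ (k + 1)) := Real.exp_pos _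
    positivity
  have hsum : ∀ n, ∑ k ∈ Finset.range n, f k = a n - a 0 := by
    intro n
    simp only [key]
    exact Finset.sum_range_sub a n
  have hlim : Filter.Tendsto a Filter.atTop (nhds (1 / p)) := by
    have h0 : Filter.Tendsto (fun k : ℕ => p / 2 ^ k) Filter.atTop (nhdsWithin 0 {0}ᶜ) := by
      apply tendsto_nhdsWithin_of_tendsto_nhds_of_eventually_within
      · have := tendsto_pow_atTop_nhds_zero_of_lt_one (by norm_num : (0:ℝ) ≤ 1/2) (by norm_num : (1:ℝ)/2 < 1)
        have : Filter.Tendsto (fun k : ℕ => p * (1/2) ^ k) Filter.atTop (nhds (p * 0)) :=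
          Filter.Tendsto.const_mul p this
        simpa [div_eq_mul_inv, inv_pow] using this
      · refine Filter.Eventually.of_forall fun k => ?_
        simp only [Set.mem_compl_iff, Set.mem_singleton_iff]
        positivity
    have hslope : Filter.Tendsto (fun x : ℝ => (Real.exp x - 1) / x) (nhdsWithin 0 {0}ᶜ)
        (nhds 1) := by
      have := (Real.hasDerivAt_exp 0)
      rw [hasDerivAt_iff_tendsto_slope] at this
      rw [Real.exp_zero] at this
      refine this.congr fun x => ?_
      simp [slope_def_field, Real.exp_zero]
    have hcomp := hslope.comp h0
    have : Filter.Tendsto (fun k : ℕ => 2 ^ k * (Real.exp (p / 2 ^ k) - 1)) Filter.atTop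
        (nhds p) := by
      have := hcomp.const_mul p
      simp only [Function.comp] at this
      have heq : ∀ k : ℕ, p * ((Real.exp (p / 2 ^ k) - 1) / (p / 2 ^ k))
          = 2 ^ k * (Real.exp (p / 2 ^ k) - 1) := by
        intro k
        have h2k : (2:ℝ) ^ k ≠ 0 := by positivity
        field_simp
      simpa [heq, mul_one] using this
    have hne : ∀ k : ℕ, 2 ^ k * (Real.exp (p / 2 ^ k) - 1) ≠ 0 := by
      intro k
      have := hexp_gt k
      have : (0:ℝ) < 2 ^ k * (Real.exp (p / 2 ^ k) - 1) := by
        have h2k : (0:ℝ) < 2 ^ k := by positivity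
        nlinarith
      linarith
    have := this.inv₀ (ne_of_gt hp)
    simpa [ha, one_div] using this
  rw [hasSum_iff_tendsto_nat_of_nonneg hpos]
  have : a 0 = 1 / (Real.exp p - 1) := by simp [ha]
  simp only [hsum, this]
  exact hlim.sub tendsto_const_nhds
end

section
/- Let A be a bounded self-adjoint positive operator on a Hilbert space with 0 ∉ σ(A) (i.e., A ≥ c > 0), and let T_t = e^{-tA}. Then A^{-1} = (1 - T_1)^{-1} - ∑_{k=1}^∞ 2^{-k} (1 + T_{1/2^k})^{-1}, with the series converging in operator norm. -/
open NormedSpace Filter Topology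

lemma dyadic_key_hasSum {x : ℝ} (hx : 0 < x) :
    HasSum (fun k : ℕ => ((1 : ℝ) / 2 ^ (k + 1)) * (1 + Real.exp (-(1 / 2 ^ (k + 1) * x)))⁻¹)
      ((1 - Real.exp (-(1 * x)))⁻¹ - x⁻¹) := by
  have hxne : x ≠ 0 := ne_of_gt hx
  set f : ℕ → ℝ := fun k => ((1 : ℝ) / 2 ^ (k + 1)) * (1 + Real.exp (-(1 / 2 ^ (k + 1) * x)))⁻¹
    with hf
  set g : ℕ → ℝ := fun n => ((1 : ℝ) / 2 ^ n) * (1 - Real.exp (-(1 / 2 ^ n * x)))⁻¹ with hg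
  have hexp_lt_one : ∀ n : ℕ, Real.exp (-(1 / 2 ^ n * x)) < 1 := by
    intro n
    rw [Real.exp_lt_one_iff]
    have : (0 : ℝ) < 1 / 2 ^ n * x := by positivity
    linarith
  -- step : g n = g (n+1) + f n
  have hstep : ∀ n : ℕ, g n = g (n + 1) + f n := by
    intro n
    set q : ℝ := Real.exp (-(1 / 2 ^ (n + 1) * x)) with hq
    have hq0 : 0 < q := Real.exp_pos _
    have hq1 : q < 1 := hexp_lt_one (n + 1)
    have hsq : Real.exp (-(1 / 2 ^ n * x)) = q ^ 2 := by
      rw [hq, ← Real.exp_nat_mul]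
      congr 1
      ring
    have h1 : (1 : ℝ) - q ≠ 0 := by nlinarith
    have h2 : (1 : ℝ) + q ≠ 0 := by nlinarith
    have key : (1 - q ^ 2)⁻¹ = (1 / 2) * ((1 - q)⁻¹ + (1 + q)⁻¹) := by
      rw [show (1 : ℝ) - q ^ 2 = (1 - q) * (1 + q) by ring, mul_inv]
      field_simp
      ring
    simp only [hg, hf, hsq, ← hq]
    rw [key]
    ring
  have hpartial : ∀ N : ℕ, ∑ k ∈ Finset.range N, f k = g 0 - g N := by
    intro N
    induction N with
    | zero => simp
    | succ n ih =>
      rw [Finset.sum_range_succ, ih, hstep n]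
      ring
  -- limit of g
  have hgt : Tendsto g atTop (𝓝 x⁻¹) := by
    have hslope : Tendsto (fun s : ℝ => (1 - Real.exp (-s)) / s) (𝓝[≠] 0) (𝓝 1) := by
      have hd : HasDerivAt (fun s : ℝ => 1 - Real.exp (-s)) 1 0 := by
        have := ((Real.hasDerivAt_exp (-0)).comp 0 (hasDerivAt_neg 0)).const_sub 1
        simpa using this
      have := hasDerivAt_iff_tendsto_slope.mp hd
      refine this.congr fun s => ?_
      simp [slope_def_field]
    have ht0 : Tendsto (fun n : ℕ => 1 / 2 ^ n * x) atTop (𝓝[≠] (0 : ℝ)) := by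
      rw [tendsto_nhdsWithin_iff]
      constructor
      · have h2 := tendsto_pow_atTop_nhds_zero_of_lt_one
          (by norm_num : (0:ℝ) ≤ 1 / 2) (by norm_num : (1:ℝ)/2 < 1)
        have := h2.mul_const x
        simpa [div_pow] using this
      · refine Eventually.of_forall fun n => ?_
        have : (0 : ℝ) < 1 / 2 ^ n * x := by positivity
        exact Set.mem_compl_singleton_iff.mpr (ne_of_gt this)
    have hcomp := hslope.comp ht0
    have hinv := hcomp.inv₀ one_ne_zero
    have hgr : g = fun n : ℕ =>
        x⁻¹ * ((1 - Real.exp (-(1 / 2 ^ n * x))) / (1 / 2 ^ n * x))⁻¹ := by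
      funext n
      have h2n : (2 : ℝ) ^ n ≠ 0 := by positivity
      simp only [hg]
      field_simp
    rw [hgr]
    have := hinv.const_mul x⁻¹
    simpa using this
  -- conclude
  have hnonneg : ∀ k, 0 ≤ f k := by
    intro k
    have h1 : (0:ℝ) < 1 + Real.exp (-(1 / 2 ^ (k+1) * x)) := by positivity
    simp only [hf]
    positivity
  rw [hasSum_iff_tendsto_nat_of_nonneg hnonneg]
  have : Tendsto (fun N : ℕ => g 0 - g N) atTop (𝓝 (g 0 - x⁻¹)) :=
    tendsto_const_nhds.sub hgt
  have hg0 : g 0 = (1 - Real.exp (-(1 * x)))⁻¹ := by norm_num [hg]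
  have goalEq : Tendsto (fun N : ℕ => ∑ k ∈ Finset.range N, f k) atTop (𝓝 (g 0 - x⁻¹)) := by
    simp only [hpartial]
    exact this
  simpa only [hg0] using goalEq

theorem dyadic_resolvent_semigroup
    {H : Type*} [NormedAddCommGroup H] [InnerProductSpace ℂ H] [CompleteSpace H]
    (A : H →L[ℂ] H) (hA : IsSelfAdjoint A) (c : ℝ) (hc : 0 < c)
    (hspec : spectrum ℂ A ⊆ Complex.ofReal '' Set.Ici c)
    (T : ℝ → (H →L[ℂ] H)) (hT : ∀ t : ℝ, T t = NormedSpace.exp (-(t • A))) :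
    Summable (fun k : ℕ => ((1 : ℝ) / 2 ^ (k + 1)) • Ring.inverse (1 + T (1 / 2 ^ (k + 1)))) ∧
    Ring.inverse A
      = Ring.inverse (1 - T 1)
        - ∑' k : ℕ, ((1 : ℝ) / 2 ^ (k + 1)) • Ring.inverse (1 + T (1 / 2 ^ (k + 1))) := by
  -- real spectrum is contained in [c, ∞)
  have hspecR : spectrum ℝ A ⊆ Set.Ici c := by
    intro x hx
    have himg := hA.spectrumRestricts.algebraMap_image (R := ℝ) (S := ℂ)
    have hx' : (x : ℂ) ∈ spectrum ℂ A := himg ▸ ⟨x, hx, rfl⟩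
    obtain ⟨y, hy, hyx⟩ := hspec hx'
    have hyx' : y = x := by exact_mod_cast hyx
    exact hyx' ▸ hy
  have hpos : ∀ x ∈ spectrum ℝ A, 0 < x := fun x hx => lt_of_lt_of_le hc (hspecR hx)
  -- T t as continuous functional calculus
  have hTc : ∀ t : ℝ, T t = cfc (fun x : ℝ => Real.exp (-(t * x))) A := by
    intro t
    have h1 : IsSelfAdjoint (-(t • A)) := (IsSelfAdjoint.smul (star_trivial t) hA).neg
    have h2 : cfc (fun x : ℝ => -(t * x)) A = -(t • A) := by
      rw [cfc_neg (fun x : ℝ => t * x) A, cfc_const_mul_id t A]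
    calc T t = NormedSpace.exp (-(t • A)) := by
          rw [hT t]
      _ = cfc Real.exp (-(t • A)) := (CFC.real_exp_eq_normedSpace_exp h1).symm
      _ = cfc Real.exp (cfc (fun x : ℝ => -(t * x)) A) := by rw [h2]
      _ = cfc (fun x : ℝ => Real.exp (-(t * x))) A := by
          rw [← cfc_comp' Real.exp (fun x : ℝ => -(t * x)) A
            Real.continuous_exp.continuousOn
            ((continuous_const.mul continuous_id).neg.continuousOn) hA]
  -- the functions
  set F : ℕ → ℝ → ℝ :=
    fun k x => ((1 : ℝ) / 2 ^ (k + 1)) * (1 + Real.exp (-(1 / 2 ^ (k + 1) * x)))⁻¹ with hF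
  have hone_add_ne : ∀ (k : ℕ) (x : ℝ), 1 + Real.exp (-(1 / 2 ^ (k + 1) * x)) ≠ 0 := by
    intro k x
    have := Real.exp_pos (-(1 / 2 ^ (k + 1) * x))
    positivity
  have hexp_cont : ∀ t : ℝ, Continuous (fun x : ℝ => Real.exp (-(t * x))) :=
    fun t => Real.continuous_exp.comp (continuous_const.mul continuous_id).neg
  have hinv_cont : ∀ k : ℕ,
      Continuous (fun x : ℝ => (1 + Real.exp (-(1 / 2 ^ (k + 1) * x)))⁻¹) := fun k =>
    (continuous_const.add (hexp_cont _)).inv₀ (hone_add_ne k)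
  have hFcont : ∀ k, Continuous (F k) := fun k => continuous_const.mul (hinv_cont k)
  -- each term of the series as cfc
  have hterm : ∀ k : ℕ,
      ((1 : ℝ) / 2 ^ (k + 1)) • Ring.inverse (1 + T (1 / 2 ^ (k + 1))) = cfc (F k) A := by
    intro k
    have h1 : (1 : H →L[ℂ] H) + T (1 / 2 ^ (k + 1))
        = cfc (fun x : ℝ => 1 + Real.exp (-(1 / 2 ^ (k + 1) * x))) A := by
      rw [hTc (1 / 2 ^ (k + 1)),
        cfc_add (R := ℝ) A (fun _ => (1 : ℝ)) (fun x => Real.exp (-(1 / 2 ^ (k + 1) * x)))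
          continuousOn_const (hexp_cont _).continuousOn,
        cfc_const_one ℝ A]
    rw [h1, ← cfc_inv (fun x : ℝ => 1 + Real.exp (-(1 / 2 ^ (k + 1) * x))) A
        (fun x _ => hone_add_ne k x) (continuous_const.add (hexp_cont _)).continuousOn hA,
      ← cfc_const_mul ((1 : ℝ) / 2 ^ (k + 1))
        (fun x : ℝ => (1 + Real.exp (-(1 / 2 ^ (k + 1) * x)))⁻¹) A (hinv_cont k).continuousOn]
  -- the series of cfc's
  have hgeo : Summable (fun k : ℕ => ((1 : ℝ) / 2) ^ (k + 1)) := by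
    simp only [pow_succ]
    exact (summable_geometric_of_lt_one (by norm_num) (by norm_num)).mul_right _
  have hFle : ∀ (k : ℕ) (x : ℝ), ‖F k x‖ ≤ ((1 : ℝ) / 2) ^ (k + 1) := by
    intro k x
    have h1 : (0 : ℝ) < 1 + Real.exp (-(1 / 2 ^ (k + 1) * x)) := by
      have := Real.exp_pos (-(1 / 2 ^ (k + 1) * x))
      linarith
    have h2 : (1 + Real.exp (-(1 / 2 ^ (k + 1) * x)))⁻¹ ≤ 1 := by
      rw [inv_le_one_iff₀]
      right
      have := Real.exp_pos (-(1 / 2 ^ (k + 1) * x))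
      linarith
    have h3 : (0 : ℝ) ≤ (1 + Real.exp (-(1 / 2 ^ (k + 1) * x)))⁻¹ := by positivity
    have h4 : F k x = ((1 : ℝ) / 2 ^ (k + 1)) * (1 + Real.exp (-(1 / 2 ^ (k + 1) * x)))⁻¹ := rfl
    rw [h4, Real.norm_eq_abs, abs_of_nonneg (by positivity)]
    calc ((1 : ℝ) / 2 ^ (k + 1)) * (1 + Real.exp (-(1 / 2 ^ (k + 1) * x)))⁻¹
        ≤ ((1 : ℝ) / 2 ^ (k + 1)) * 1 := by
          apply mul_le_mul_of_nonneg_left h2 (by positivity)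
      _ = ((1 : ℝ) / 2) ^ (k + 1) := by rw [mul_one, div_pow, one_pow]
  set Fc : ℕ → C(spectrum ℝ A, ℝ) :=
    fun k => ⟨(spectrum ℝ A).restrict (F k), ((hFcont k).continuousOn).restrict⟩ with hFc
  have hFcsum : Summable Fc := by
    apply Summable.of_norm_bounded hgeo
    intro k
    exact (ContinuousMap.norm_le _ (by positivity)).mpr fun x => hFle k x
  set Fsum : ℝ → ℝ := fun x => ∑' k, F k x with hFsum
  have hFsumc : Continuous Fsum := continuous_tsum hFcont hgeo hFle
  have hrestrict : (∑' k, Fc k)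
      = ⟨(spectrum ℝ A).restrict Fsum, hFsumc.continuousOn.restrict⟩ := by
    ext x
    rw [← ContinuousMap.tsum_apply hFcsum x]
    rfl
  have hmap := hFcsum.hasSum.map (cfcHom hA (R := ℝ)) (cfcHom_isClosedEmbedding hA).continuous
  have hmap' : HasSum (fun k => cfc (F k) A) (cfc Fsum A) := by
    have h1 : ∀ k, (cfcHom hA (R := ℝ)) (Fc k) = cfc (F k) A :=
      fun k => (cfc_apply (F k) A hA (hFcont k).continuousOn).symm
    have h2 : (cfcHom hA (R := ℝ)) (∑' k, Fc k) = cfc Fsum A := by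
      rw [hrestrict, cfc_apply Fsum A hA hFsumc.continuousOn]
      rfl
    rw [← h2]
    exact (funext h1 : _) ▸ hmap
  -- summability of the operator series
  have hsummable : Summable
      (fun k : ℕ => ((1 : ℝ) / 2 ^ (k + 1)) • Ring.inverse (1 + T (1 / 2 ^ (k + 1)))) := by
    rw [funext hterm]
    exact hmap'.summable
  refine ⟨hsummable, ?_⟩
  -- the resolvent as cfc
  have hinvA : Ring.inverse A = cfc (fun x : ℝ => x⁻¹) A := by
    conv_lhs => rw [← cfc_id ℝ A hA]
    rw [← cfc_inv (id : ℝ → ℝ) A (fun x hx => ne_of_gt (hpos x hx)) continuousOn_id hA]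
    rfl
  have hone_sub_ne : ∀ x ∈ spectrum ℝ A, 1 - Real.exp (-(1 * x)) ≠ 0 := by
    intro x hx
    have h1 : Real.exp (-(1 * x)) < 1 := by
      rw [Real.exp_lt_one_iff]
      have := hpos x hx
      linarith
    linarith
  have hG : ContinuousOn (fun x : ℝ => (1 - Real.exp (-(1 * x)))⁻¹) (spectrum ℝ A) :=
    ((continuous_const.sub (hexp_cont 1)).continuousOn).inv₀ hone_sub_ne
  have hinv1 : Ring.inverse (1 - T 1) = cfc (fun x : ℝ => (1 - Real.exp (-(1 * x)))⁻¹) A := by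
    have h1 : (1 : H →L[ℂ] H) - T 1 = cfc (fun x : ℝ => 1 - Real.exp (-(1 * x))) A := by
      rw [hTc 1,
        cfc_sub (R := ℝ) (fun _ => (1 : ℝ)) (fun x => Real.exp (-(1 * x))) A
          continuousOn_const (hexp_cont 1).continuousOn,
        cfc_const_one ℝ A]
    rw [h1, ← cfc_inv (fun x : ℝ => 1 - Real.exp (-(1 * x))) A hone_sub_ne
      (continuous_const.sub (hexp_cont 1)).continuousOn hA]
  -- final computation
  have htsum : (∑' k : ℕ, ((1 : ℝ) / 2 ^ (k + 1)) • Ring.inverse (1 + T (1 / 2 ^ (k + 1))))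
      = cfc Fsum A := by
    rw [funext hterm]
    exact hmap'.tsum_eq
  rw [hinvA, hinv1, htsum, ← cfc_sub (fun x : ℝ => (1 - Real.exp (-(1 * x)))⁻¹) Fsum A hG
    hFsumc.continuousOn]
  apply cfc_congr
  intro x hx
  have hkey := (dyadic_key_hasSum (hpos x hx)).tsum_eq
  have hfx : Fsum x = (1 - Real.exp (-(1 * x)))⁻¹ - x⁻¹ := hkey
  show x⁻¹ = (1 - Real.exp (-(1 * x)))⁻¹ - Fsum x
  rw [hfx]
  ring
end

section
/- Let A be a bounded positive self-adjoint operator on a Hilbert space with spectrum in [c,∞), c > 0, and T_t = e^{-tA}. Then A^{-1} = ∑_{j=1}^∞ T_j - lim_{ℓ→∞} ∑_{k=1}^ℓ ∑_{j=1}^∞ 2^{-k}(-1)^j T_{j/2^k}, where all series converge in operator norm. -/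
set_option maxHeartbeats 2000000
set_option synthInstance.maxHeartbeats 400000

open NormedSpace

lemma aux_ring_inverse_smul {M : Type*} [NormedRing M] [NormedAlgebra ℝ M]
    (u : Mˣ) (c : ℝ) (hc : c ≠ 0) :
    Ring.inverse (c • (u : M)) = c⁻¹ • (↑u⁻¹ : M) := by
  let v : Mˣ := ⟨c • (u : M), c⁻¹ • (↑u⁻¹ : M),
    by rw [smul_mul_smul_comm]; simp [hc],
    by rw [smul_mul_smul_comm]; simp [inv_mul_cancel₀ hc]⟩
  have hv : c • (u : M) = (v : M) := rfl
  rw [hv, Ring.inverse_unit v]; rfl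

lemma aux_smul_neg_one_pow {M : Type*} [Ring M] [Module ℝ M] :
    ∀ (n : ℕ) (y : M), ((-1 : ℝ) ^ n) • y = (-1 : M) ^ n * y := by
  intro n
  induction n with
  | zero => intro y; simp
  | succ n ih =>
    intro y
    rw [pow_succ, pow_succ, mul_smul, neg_one_smul, ih, mul_assoc, neg_one_mul, mul_neg]

lemma aux_exp_lb {y : ℝ} (hy : 0 ≤ y) : 0 ≤ Real.exp (-y) - 1 + y := by
  nlinarith [Real.add_one_le_exp (-y)]

lemma aux_exp_ub {y : ℝ} (hy : 0 ≤ y) : Real.exp (-y) - 1 + y ≤ y ^ 2 / 2 := by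
  have h1 : 1 + y + y ^ 2 / 2 ≤ Real.exp y := Real.quadratic_le_exp_of_nonneg hy
  have h2 : Real.exp (-y) = (Real.exp y)⁻¹ := Real.exp_neg y
  have h3 : 0 < Real.exp y := Real.exp_pos y
  have h4 : (Real.exp y)⁻¹ ≤ (1 + y + y ^ 2 / 2)⁻¹ := inv_anti₀ (by nlinarith) h1
  have h5 : (1 + y + y ^ 2 / 2)⁻¹ ≤ 1 - y + y ^ 2 / 2 := by
    rw [inv_le_iff_one_le_mul₀ (by nlinarith)]
    nlinarith [sq_nonneg y, sq_nonneg (y ^ 2)]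
  nlinarith

lemma aux_key_alg {M : Type*} [NormedRing M] [NormedAlgebra ℝ M] [CompleteSpace M]
    (p : M) (hp : ‖p‖ < 1) (a : ℝ) :
    (2 * a) • (p ^ 2 * Ring.inverse (1 - p ^ 2)) - a • (p * Ring.inverse (1 - p))
      = -(a • (p * Ring.inverse (1 + p))) := by
  have hpn : ‖-p‖ < 1 := by simpa using hp
  have hp2 : ‖p ^ 2‖ < 1 := by
    calc ‖p ^ 2‖ ≤ ‖p‖ * ‖p‖ := by simpa [sq] using norm_mul_le p p
    _ < 1 := by nlinarith [norm_nonneg p]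
  have hu1 : IsUnit (1 - p) := isUnit_one_sub_of_norm_lt_one hp
  have hu2 : IsUnit (1 + p) := by
    simpa [sub_neg_eq_add] using isUnit_one_sub_of_norm_lt_one hpn
  have hu3 : IsUnit (1 - p ^ 2) := isUnit_one_sub_of_norm_lt_one hp2
  refine (hu1.mul hu2).mul_right_cancel ?_
  have h12 : (1 - p) * (1 + p) = 1 - p ^ 2 := by noncomm_ring
  have h21 : (1 - p) * (1 + p) = (1 + p) * (1 - p) := by noncomm_ring
  rw [sub_mul, neg_mul, smul_mul_assoc, smul_mul_assoc, smul_mul_assoc]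
  rw [show p ^ 2 * Ring.inverse (1 - p ^ 2) * ((1 - p) * (1 + p))
      = p ^ 2 * (Ring.inverse (1 - p ^ 2) * (1 - p ^ 2)) from by rw [h12, mul_assoc]]
  rw [show p * Ring.inverse (1 - p) * ((1 - p) * (1 + p))
      = p * ((Ring.inverse (1 - p) * (1 - p)) * (1 + p)) from by
        rw [mul_assoc, ← mul_assoc (Ring.inverse (1 - p))]]
  rw [show p * Ring.inverse (1 + p) * ((1 - p) * (1 + p))
      = p * ((Ring.inverse (1 + p) * (1 + p)) * (1 - p)) from by
        rw [h21, mul_assoc, ← mul_assoc (Ring.inverse (1 + p))]]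
  rw [Ring.inverse_mul_cancel _ hu1, Ring.inverse_mul_cancel _ hu2,
      Ring.inverse_mul_cancel _ hu3]
  simp only [mul_one, one_mul, mul_add, mul_sub, ← sq]
  module

theorem dyadic_resolvent_semigroup_series
    {H : Type*} [NormedAddCommGroup H] [InnerProductSpace ℂ H] [CompleteSpace H]
    (A : H →L[ℂ] H) (hA : IsSelfAdjoint A) (c : ℝ) (hc : 0 < c)
    (hspec : spectrum ℂ A ⊆ Complex.ofReal '' Set.Ici c)
    (T : ℝ → (H →L[ℂ] H)) (hT : ∀ t : ℝ, T t = NormedSpace.exp (-(t • A))) :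
    Summable (fun j : ℕ => T ((j : ℝ) + 1)) ∧
    (∀ k : ℕ, Summable (fun j : ℕ => (((-1 : ℝ) ^ (j + 1)) / 2 ^ (k + 1)) • T (((j : ℝ) + 1) / 2 ^ (k + 1)))) ∧
    ∃ L : H →L[ℂ] H,
      Filter.Tendsto
        (fun ℓ : ℕ => ∑ k ∈ Finset.range ℓ,
          ∑' j : ℕ, (((-1 : ℝ) ^ (j + 1)) / 2 ^ (k + 1)) • T (((j : ℝ) + 1) / 2 ^ (k + 1)))
        Filter.atTop (nhds L) ∧
      Ring.inverse A = (∑' j : ℕ, T ((j : ℝ) + 1)) - L := by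
  -- real spectrum
  have hspecR : spectrum ℝ A ⊆ Set.Ici c := by
    intro x hx
    have hx' : (algebraMap ℝ ℂ x) ∈ spectrum ℂ A := spectrum.algebraMap_mem ℂ hx
    obtain ⟨y, hy, hxy⟩ := hspec hx'
    have : y = x := Complex.ofReal_inj.mp (by simpa using hxy)
    exact this ▸ hy
  have hxnorm : ∀ x ∈ spectrum ℝ A, x ≤ ‖A‖ := by
    intro x hx
    have h1 := spectrum.norm_le_norm_mul_of_mem hx
    have h2 : ‖(1 : H →L[ℂ] H)‖ ≤ 1 := ContinuousLinearMap.norm_id_le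
    have h3 : (0 : ℝ) ≤ ‖A‖ := norm_nonneg _
    have : |x| ≤ ‖A‖ := by
      calc |x| = ‖x‖ := rfl
        _ ≤ ‖A‖ * ‖(1 : H →L[ℂ] H)‖ := h1
        _ ≤ ‖A‖ := by nlinarith
    exact (le_abs_self x).trans this
  -- T via cfc
  have hTcfc : ∀ h : ℝ, T h = cfc (fun x : ℝ => Real.exp (-(h * x))) A := by
    intro h
    rw [hT]
    have hh : IsSelfAdjoint h := star_trivial h
    have hsa : IsSelfAdjoint (-(h • A)) := (hh.smul hA).neg
    rw [← CFC.real_exp_eq_normedSpace_exp hsa]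
    have h2 : -(h • A) = (-h) • A := by module
    rw [h2, ← cfc_comp_smul (-h) Real.exp A]
    simp [neg_mul]
  -- norm bounds
  have hTnorm : ∀ h : ℝ, 0 ≤ h → ‖T h‖ ≤ Real.exp (-(h * c)) := by
    intro h hh
    rw [hTcfc h]
    refine norm_cfc_le (Real.exp_nonneg _) fun x hx => ?_
    have hcx : c ≤ x := hspecR hx
    rw [Real.norm_eq_abs, abs_of_pos (Real.exp_pos _)]
    exact Real.exp_le_exp.2 (by nlinarith)
  have hTlt : ∀ h : ℝ, 0 < h → ‖T h‖ < 1 := by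
    intro h hh
    refine (hTnorm h hh.le).trans_lt ?_
    rw [← Real.exp_zero]
    exact Real.exp_lt_exp.2 (by nlinarith)
  -- semigroup
  have hTadd : ∀ a b : ℝ, T (a + b) = T a * T b := by
    intro a b
    rw [hT, hT, hT, show -((a + b) • A) = -(a • A) + -(b • A) from by module]
    letI : NormedAlgebra ℚ (H →L[ℂ] H) := NormedAlgebra.restrictScalars ℚ ℂ (H →L[ℂ] H)
    refine NormedSpace.exp_add_of_commute ?_
    have : Commute (a • A) (b • A) := ((Commute.refl A).smul_left a).smul_right b
    exact this.neg_left.neg_right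
  have hTpow : ∀ (h : ℝ) (j : ℕ), T (((j : ℝ) + 1) * h) = T h ^ (j + 1) := by
    intro h j
    induction j with
    | zero => simp
    | succ j ih =>
      rw [show (((j + 1 : ℕ) : ℝ) + 1) * h = ((j : ℝ) + 1) * h + h from by push_cast; ring,
        hTadd, ih]
      exact (pow_succ _ _).symm
  -- dyadic sequence
  set r : ℕ → ℝ := fun k => ((2 : ℝ) ^ k)⁻¹ with hrdef
  have hrpos : ∀ k, 0 < r k := fun k => by positivity
  have hr2 : ∀ k, r k = 2 * r (k + 1) := by
    intro k
    simp only [hrdef, pow_succ]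
    field_simp
  set D : ℕ → (H →L[ℂ] H) :=
    fun k => r k • (T (r k) * Ring.inverse (1 - T (r k))) with hDdef
  -- part 1
  have hT1lt : ‖T 1‖ < 1 := hTlt 1 one_pos
  have e1 : ∀ j : ℕ, T ((j : ℝ) + 1) = T 1 ^ (j + 1) := by
    intro j
    simpa using hTpow 1 j
  have hsum1 : Summable (fun j : ℕ => T ((j : ℝ) + 1)) := by
    refine Summable.congr ?_ (fun j => (e1 j).symm)
    exact (summable_nat_add_iff 1).mpr (summable_geometric_of_norm_lt_one hT1lt)
  have htsum1 : (∑' j : ℕ, T ((j : ℝ) + 1)) = D 0 := by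
    rw [tsum_congr e1, ← geom_series_mul_shift _ hT1lt, geom_series_eq_inverse _ hT1lt]
    simp [hDdef, hrdef]
  -- per level k
  have hplt : ∀ k : ℕ, ‖T (r (k + 1))‖ < 1 := fun k => hTlt _ (hrpos (k + 1))
  have e2 : ∀ (k j : ℕ), (((-1 : ℝ) ^ (j + 1)) / 2 ^ (k + 1)) • T (((j : ℝ) + 1) / 2 ^ (k + 1))
      = ((2 : ℝ) ^ (k + 1))⁻¹ • (-(T (r (k + 1)))) ^ (j + 1) := by
    intro k j
    have harg : ((j : ℝ) + 1) / 2 ^ (k + 1) = ((j : ℝ) + 1) * r (k + 1) := by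
      rw [div_eq_mul_inv]
    rw [harg, hTpow, div_eq_mul_inv, mul_comm, mul_smul, aux_smul_neg_one_pow,
      ← neg_pow]
  have hsumgeo : ∀ k : ℕ, Summable (fun j : ℕ => (-(T (r (k + 1)))) ^ (j + 1)) := by
    intro k
    refine (summable_nat_add_iff 1).mpr (summable_geometric_of_norm_lt_one ?_)
    simpa using hplt k
  have hsum2 : ∀ k : ℕ, Summable (fun j : ℕ =>
      (((-1 : ℝ) ^ (j + 1)) / 2 ^ (k + 1)) • T (((j : ℝ) + 1) / 2 ^ (k + 1))) := by
    intro k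
    refine Summable.congr ?_ (fun j => (e2 k j).symm)
    exact (hsumgeo k).const_smul _
  have htsum2 : ∀ k : ℕ, (∑' j : ℕ,
      (((-1 : ℝ) ^ (j + 1)) / 2 ^ (k + 1)) • T (((j : ℝ) + 1) / 2 ^ (k + 1)))
      = -(r (k + 1) • (T (r (k + 1)) * Ring.inverse (1 + T (r (k + 1))))) := by
    intro k
    set p := T (r (k + 1)) with hpdef
    have hnp : ‖-p‖ < 1 := by simpa using hplt k
    rw [tsum_congr (e2 k), Summable.tsum_const_smul _ (hsumgeo k),
      ← geom_series_mul_shift _ hnp, geom_series_eq_inverse _ hnp]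
    try rw [sub_neg_eq_add, neg_mul, smul_neg]
    try rfl
  -- telescoping
  have hTsq : ∀ k : ℕ, T (r k) = T (r (k + 1)) ^ 2 := by
    intro k
    rw [show r k = r (k + 1) + r (k + 1) from by rw [hr2 k]; ring, hTadd, sq]
  have hinner : ∀ k : ℕ, (∑' j : ℕ,
      (((-1 : ℝ) ^ (j + 1)) / 2 ^ (k + 1)) • T (((j : ℝ) + 1) / 2 ^ (k + 1)))
      = D k - D (k + 1) := by
    intro k
    rw [htsum2 k, hDdef]
    have := aux_key_alg (T (r (k + 1))) (hplt k) (r (k + 1))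
    rw [← this, ← hTsq k, ← hr2 k]
  -- invertibility of A
  have hAunit : IsUnit A := by
    refine spectrum.isUnit_of_zero_notMem (R := ℂ) ?_
    intro h0
    obtain ⟨y, hy, hy0⟩ := hspec h0
    have : y = 0 := Complex.ofReal_inj.mp (by simpa using hy0)
    rw [this] at hy
    exact absurd hy (by simpa using hc)
  -- B tends to A
  set B : ℕ → (H →L[ℂ] H) := fun ℓ => (r ℓ)⁻¹ • (1 - T (r ℓ)) with hBdef
  have hBbound : ∀ ℓ : ℕ, ‖B ℓ - A‖ ≤ r ℓ * ‖A‖ ^ 2 := by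
    intro ℓ
    set h := r ℓ with hhdef
    have hh : 0 < h := hrpos ℓ
    have hBcfc : B ℓ - A
        = cfc (fun x : ℝ => h⁻¹ * (1 - Real.exp (-(h * x))) - x) A := by
      rw [cfc_sub _ _ A, cfc_id' ℝ A]
      congr 1
      rw [hBdef]
      have : (fun x : ℝ => h⁻¹ * (1 - Real.exp (-(h * x))))
          = fun x : ℝ => h⁻¹ • ((fun y : ℝ => 1 - Real.exp (-(h * y))) x) := by
        funext x; simp [smul_eq_mul]
      rw [this, cfc_smul h⁻¹ _ A, cfc_sub _ _ A,
        show cfc (fun _ : ℝ => (1 : ℝ)) A = 1 from by rw [cfc_const (1 : ℝ) A hA, map_one],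
        ← hTcfc]
    rw [hBcfc]
    refine norm_cfc_le (by positivity) fun x hx => ?_
    have hcx : c ≤ x := hspecR hx
    have hxA : x ≤ ‖A‖ := hxnorm x hx
    have hx0 : 0 < x := hc.trans_le hcx
    have hyx : 0 ≤ h * x := by positivity
    have hub := aux_exp_ub hyx
    have hlb := aux_exp_lb hyx
    rw [Real.norm_eq_abs]
    have hval : h⁻¹ * (1 - Real.exp (-(h * x))) - x
        = -(h⁻¹ * (Real.exp (-(h * x)) - 1 + h * x)) := by
      field_simp
      ring
    rw [hval, abs_neg, abs_of_nonneg (by positivity)]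
    have hinv : 0 < h⁻¹ := by positivity
    calc h⁻¹ * (Real.exp (-(h * x)) - 1 + h * x) ≤ h⁻¹ * ((h * x) ^ 2 / 2) :=
          mul_le_mul_of_nonneg_left hub hinv.le
      _ = h * x ^ 2 / 2 := by field_simp
      _ ≤ h * ‖A‖ ^ 2 := by nlinarith [mul_le_mul hxA hxA hx0.le (norm_nonneg A)]
  have hT1bound : ∀ ℓ : ℕ, ‖T (r ℓ) - 1‖ ≤ r ℓ * ‖A‖ := by
    intro ℓ
    set h := r ℓ with hhdef
    have hh : 0 < h := hrpos ℓ
    have hcfc : T (r ℓ) - 1 = cfc (fun x : ℝ => Real.exp (-(h * x)) - 1) A := by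
      rw [cfc_sub _ _ A,
        show cfc (fun _ : ℝ => (1 : ℝ)) A = 1 from by rw [cfc_const (1 : ℝ) A hA, map_one],
        ← hTcfc]
    rw [hcfc]
    have hA0 : (0 : ℝ) ≤ ‖A‖ := norm_nonneg _
    refine norm_cfc_le (by positivity) fun x hx => ?_
    have hcx : c ≤ x := hspecR hx
    have hxA : x ≤ ‖A‖ := hxnorm x hx
    have hx0 : 0 < x := hc.trans_le hcx
    have hyx : 0 ≤ h * x := by positivity
    have hle : Real.exp (-(h * x)) ≤ 1 := by
      rw [← Real.exp_zero]; exact Real.exp_le_exp.2 (by nlinarith)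
    have hge : 1 - h * x ≤ Real.exp (-(h * x)) := by
      nlinarith [Real.add_one_le_exp (-(h * x))]
    rw [Real.norm_eq_abs, abs_of_nonpos (by nlinarith), neg_sub]
    nlinarith
  have hr0 : Filter.Tendsto r Filter.atTop (nhds 0) := by
    have : r = fun k => ((2 : ℝ)⁻¹) ^ k := by
      funext k; rw [hrdef]; simp [inv_pow]
    rw [this]
    exact tendsto_pow_atTop_nhds_zero_of_lt_one (by norm_num) (by norm_num)
  have hTto1 : Filter.Tendsto (fun ℓ => T (r ℓ)) Filter.atTop (nhds 1) := by
    rw [← tendsto_sub_nhds_zero_iff]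
    refine squeeze_zero_norm hT1bound ?_
    simpa using hr0.mul_const ‖A‖
  have hBtoA : Filter.Tendsto B Filter.atTop (nhds A) := by
    rw [← tendsto_sub_nhds_zero_iff]
    refine squeeze_zero_norm hBbound ?_
    simpa using hr0.mul_const (‖A‖ ^ 2)
  have hRB : Filter.Tendsto (fun ℓ => Ring.inverse (B ℓ)) Filter.atTop
      (nhds (Ring.inverse A)) := by
    have hcont : ContinuousAt Ring.inverse A := by
      have := NormedRing.inverse_continuousAt hAunit.unit
      rwa [hAunit.unit_spec] at this
    exact hcont.tendsto.comp hBtoA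
  have hDeq : ∀ ℓ : ℕ, D ℓ = T (r ℓ) * Ring.inverse (B ℓ) := by
    intro ℓ
    have hh : 0 < r ℓ := hrpos ℓ
    have hu : IsUnit (1 - T (r ℓ)) := isUnit_one_sub_of_norm_lt_one (hTlt _ hh)
    have h1 : Ring.inverse (B ℓ) = r ℓ • Ring.inverse (1 - T (r ℓ)) := by
      calc Ring.inverse (B ℓ) = Ring.inverse ((r ℓ)⁻¹ • (hu.unit : H →L[ℂ] H)) := by
            rw [hBdef, hu.unit_spec]
        _ = ((r ℓ)⁻¹)⁻¹ • ((hu.unit⁻¹ : (H →L[ℂ] H)ˣ) : H →L[ℂ] H) :=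
            aux_ring_inverse_smul _ _ (inv_ne_zero hh.ne')
        _ = r ℓ • Ring.inverse (1 - T (r ℓ)) := by
            rw [inv_inv, ← Ring.inverse_unit hu.unit, hu.unit_spec]
    rw [h1, hDdef, mul_smul_comm]
  have hDlim : Filter.Tendsto D Filter.atTop (nhds (Ring.inverse A)) := by
    have := hTto1.mul hRB
    rw [one_mul] at this
    exact this.congr fun ℓ => (hDeq ℓ).symm
  refine ⟨hsum1, hsum2, D 0 - Ring.inverse A, ?_, ?_⟩
  · have hps : ∀ ℓ : ℕ, (∑ k ∈ Finset.range ℓ,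
        ∑' j : ℕ, (((-1 : ℝ) ^ (j + 1)) / 2 ^ (k + 1)) • T (((j : ℝ) + 1) / 2 ^ (k + 1)))
        = D 0 - D ℓ := by
      intro ℓ
      rw [Finset.sum_congr rfl fun k _ => hinner k]
      exact Finset.sum_range_sub' D ℓ
    simp only [hps]
    exact Filter.Tendsto.sub tendsto_const_nhds hDlim
  · rw [htsum1, sub_sub_cancel]
end

section
/- For every natural number k, complex s, and z with 0 < |z| < 1, the k-th derivative of the polylogarithm satisfies d^k/dz^k Li_s(z) = z^{-k} ∑_{j=0}^k S1(k,j) Li_{s-j}(z), where S1(k,j) are the (signed) Stirling numbers of the first kind. -/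
noncomputable def polylog (s : ℂ) (z : ℂ) : ℂ :=
  ∑' n : ℕ, z ^ (n + 1) / ((n + 1 : ℕ) : ℂ) ^ s

/-- Signed Stirling numbers of the first kind. -/
def stirlingFirst : ℕ → ℕ → ℤ
  | 0, 0 => 1
  | 0, _ + 1 => 0
  | k + 1, 0 => -(k : ℤ) * stirlingFirst k 0
  | k + 1, j + 1 => -(k : ℤ) * stirlingFirst k (j + 1) + stirlingFirst k j

private lemma stirling_eq_zero : ∀ {k j : ℕ}, k < j → stirlingFirst k j = 0 := by
  intro k
  induction k with
  | zero => intro j h; cases j with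
    | zero => omega
    | succ j => rfl
  | succ k ih =>
    intro j h
    cases j with
    | zero => omega
    | succ j =>
      rw [stirlingFirst, ih (by omega), ih (by omega)]
      ring

private lemma polylog_hasDerivAt (s : ℂ) {z : ℂ} (hz0 : z ≠ 0) (hz : ‖z‖ < 1) :
    HasDerivAt (polylog s) (polylog (s - 1) z / z) z := by
  set r : ℝ := (‖z‖ + 1) / 2 with hrdef
  have hzr : ‖z‖ < r := by rw [hrdef]; linarith
  have hr0 : 0 < r := lt_of_le_of_lt (norm_nonneg z) hzr
  have hr1 : r < 1 := by rw [hrdef]; linarith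
  set C : ℕ := ⌈|s.re|⌉₊ + 1 with hC
  -- summable bound
  have hu : Summable fun n : ℕ => ((n + 1 : ℕ) : ℝ) ^ C * r ^ n := by
    have h1 : Summable fun n : ℕ => (n : ℝ) ^ C * r ^ n :=
      summable_pow_mul_geometric_of_norm_lt_one C
        (by rwa [Real.norm_eq_abs, abs_of_pos hr0])
    have h2 := (h1.comp_injective (add_left_injective 1)).mul_left r⁻¹
    refine h2.congr fun n => ?_
    have : ((n + 1 : ℕ) : ℝ) ^ C * r ^ (n + 1) = r * (((n + 1 : ℕ) : ℝ) ^ C * r ^ n) := by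
      ring
    simp only [Function.comp]
    push_cast
    rw [pow_succ]
    field_simp
    ring
  have hnormpow : ∀ (n : ℕ) (w : ℂ), ‖((n + 1 : ℕ) : ℂ) ^ w‖
      = ((n + 1 : ℕ) : ℝ) ^ w.re := by
    intro n w
    have hpos : (0 : ℝ) < ((n + 1 : ℕ) : ℝ) := by positivity
    rw [show ((n + 1 : ℕ) : ℂ) = (((n + 1 : ℕ) : ℝ) : ℂ) by push_cast; ring]
    exact Complex.norm_cpow_eq_rpow_re_of_pos hpos w
  have hne : ∀ n : ℕ, ((n + 1 : ℕ) : ℂ) ≠ 0 := by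
    intro n; exact_mod_cast Nat.succ_ne_zero n
  have key : HasDerivAt (fun y : ℂ => ∑' n : ℕ, y ^ (n + 1) / ((n + 1 : ℕ) : ℂ) ^ s)
      (∑' n : ℕ, ((n + 1 : ℕ) : ℂ) * z ^ n / ((n + 1 : ℕ) : ℂ) ^ s) z := by
    refine hasDerivAt_tsum_of_isPreconnected (𝕜 := ℂ) (F := ℂ)
      (g := fun n y => y ^ (n + 1) / ((n + 1 : ℕ) : ℂ) ^ s)
      (g' := fun n y => ((n + 1 : ℕ) : ℂ) * y ^ n / ((n + 1 : ℕ) : ℂ) ^ s) hu Metric.isOpen_ball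
      (convex_ball (0:ℂ) r).isPreconnected
      (fun n y _ => ?_) (fun n y hy => ?_) (Metric.mem_ball_self hr0) ?_ ?_
    · have := (hasDerivAt_pow (n + 1) y).div_const (((n + 1 : ℕ) : ℂ) ^ s)
      simpa using this
    · rw [Metric.mem_ball, dist_zero_right] at hy
      have hyr : ‖y‖ ≤ r := le_of_lt hy
      have hx1 : (1 : ℝ) ≤ ((n + 1 : ℕ) : ℝ) := by exact_mod_cast Nat.one_le_iff_ne_zero.2 (Nat.succ_ne_zero n)
      have hx0 : (0 : ℝ) < ((n + 1 : ℕ) : ℝ) := by positivity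
      have : ‖((n + 1 : ℕ) : ℂ) * y ^ n / ((n + 1 : ℕ) : ℂ) ^ s‖
          = ((n + 1 : ℕ) : ℝ) * (‖y‖) ^ n * ((n + 1 : ℕ) : ℝ) ^ (-s.re) := by
        rw [norm_div, norm_mul, norm_pow, hnormpow,
          Complex.norm_natCast, Real.rpow_neg (le_of_lt hx0)]
        field_simp
      rw [this]
      have h1 : ((n + 1 : ℕ) : ℝ) * ((n + 1 : ℕ) : ℝ) ^ (-s.re) ≤ ((n + 1 : ℕ) : ℝ) ^ C := by
        have : ((n + 1 : ℕ) : ℝ) * ((n + 1 : ℕ) : ℝ) ^ (-s.re)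
            = ((n + 1 : ℕ) : ℝ) ^ (1 + (-s.re)) := by
          rw [Real.rpow_add hx0, Real.rpow_one]
        rw [this, ← Real.rpow_natCast _ C]
        apply Real.rpow_le_rpow_of_exponent_le hx1
        have h2 : |s.re| ≤ (⌈|s.re|⌉₊ : ℝ) := Nat.le_ceil _
        have h3 : -s.re ≤ |s.re| := neg_le_abs _
        rw [hC]; push_cast; linarith
      calc ((n + 1 : ℕ) : ℝ) * ‖y‖ ^ n * ((n + 1 : ℕ) : ℝ) ^ (-s.re)
          ≤ ((n + 1 : ℕ) : ℝ) * r ^ n * ((n + 1 : ℕ) : ℝ) ^ (-s.re) := by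
            gcongr
        _ = ((n + 1 : ℕ) : ℝ) * ((n + 1 : ℕ) : ℝ) ^ (-s.re) * r ^ n := by ring
        _ ≤ ((n + 1 : ℕ) : ℝ) ^ C * r ^ n := by
            gcongr
    · have : (fun n : ℕ => (0:ℂ) ^ (n + 1) / ((n + 1 : ℕ) : ℂ) ^ s) = fun _ => (0:ℂ) := by
        funext n; simp
      rw [this]
      exact summable_zero
    · exact Metric.mem_ball.2 (by rwa [dist_zero_right])
  have heq : (∑' n : ℕ, ((n + 1 : ℕ) : ℂ) * z ^ n / ((n + 1 : ℕ) : ℂ) ^ s)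
      = polylog (s - 1) z / z := by
    unfold polylog
    rw [← tsum_div_const]
    refine tsum_congr fun n => ?_
    have hcs : ((n + 1 : ℕ) : ℂ) ^ s ≠ 0 := fun h => hne n ((Complex.cpow_eq_zero_iff _ _).mp h).1
    rw [eq_div_iff hz0, Complex.cpow_sub _ _ (hne n), Complex.cpow_one, pow_succ,
      div_div_eq_mul_div]
    field_simp
  rw [← heq]
  exact key

private lemma polylog_aux (s : ℂ) (k : ℕ) :
    ∀ z : ℂ, z ≠ 0 → ‖z‖ < 1 →
    iteratedDeriv k (polylog s) z
      = z ^ (-(k : ℤ)) *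
          ∑ j ∈ Finset.range (k + 1), (stirlingFirst k j : ℂ) * polylog (s - j) z := by
  induction k with
  | zero =>
    intro z hz0 hz
    simp [stirlingFirst]
  | succ k ih =>
    intro z hz0 hz
    rw [iteratedDeriv_succ]
    have hU : IsOpen {w : ℂ | w ≠ 0 ∧ ‖w‖ < 1} := by
      have h1 : IsOpen {w : ℂ | w ≠ 0} := isOpen_ne
      have h2 : IsOpen {w : ℂ | ‖w‖ < 1} :=
        isOpen_lt continuous_norm continuous_const
      exact h1.inter h2
    have hev : iteratedDeriv k (polylog s) =ᶠ[nhds z]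
        fun w => w ^ (-(k : ℤ)) *
          ∑ j ∈ Finset.range (k + 1), (stirlingFirst k j : ℂ) * polylog (s - j) w := by
      filter_upwards [hU.mem_nhds ⟨hz0, hz⟩] with w hw using ih w hw.1 hw.2
    rw [hev.deriv_eq]
    -- differentiate the closed form
    have hF : HasDerivAt
        (fun w => ∑ j ∈ Finset.range (k + 1), (stirlingFirst k j : ℂ) * polylog (s - j) w)
        (∑ j ∈ Finset.range (k + 1), (stirlingFirst k j : ℂ) * (polylog (s - j - 1) z / z)) z :=
      HasDerivAt.fun_sum fun j _ => (polylog_hasDerivAt (s - j) hz0 hz).const_mul _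
    have hzpow := hasDerivAt_zpow (-(k : ℤ)) z (Or.inl hz0)
    rw [(hzpow.fun_mul hF).deriv]
    -- algebra
    have hterm : ∀ j : ℕ, ((stirlingFirst (k + 1) (j + 1) : ℤ) : ℂ)
        = -(k : ℂ) * (stirlingFirst k (j + 1) : ℂ) + (stirlingFirst k j : ℂ) := by
      intro j; rw [stirlingFirst]; push_cast; ring
    have hterm0 : ((stirlingFirst (k + 1) 0 : ℤ) : ℂ) = -(k : ℂ) * (stirlingFirst k 0 : ℂ) := by
      rw [stirlingFirst]; push_cast; ring
    have h0 : ∑ j ∈ Finset.range (k + 2), (stirlingFirst k j : ℂ) * polylog (s - j) z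
        = ∑ j ∈ Finset.range (k + 1), (stirlingFirst k j : ℂ) * polylog (s - j) z := by
      rw [Finset.sum_range_succ, stirling_eq_zero (by omega)]
      simp
    have key : ∑ j ∈ Finset.range (k + 2), (stirlingFirst (k + 1) j : ℂ) * polylog (s - j) z
        = -(k : ℂ) * ∑ j ∈ Finset.range (k + 1), (stirlingFirst k j : ℂ) * polylog (s - j) z
          + ∑ j ∈ Finset.range (k + 1), (stirlingFirst k j : ℂ) * polylog (s - j - 1) z := by
      rw [← h0,
        Finset.sum_range_succ' (fun j => (stirlingFirst (k + 1) j : ℂ) * polylog (s - j) z) (k + 1),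
        Finset.sum_range_succ' (fun j => (stirlingFirst k j : ℂ) * polylog (s - j) z) (k + 1)]
      simp only [hterm, hterm0, Nat.cast_add, Nat.cast_one, Nat.cast_zero, sub_zero,
        sub_add_eq_sub_sub, add_mul, Finset.sum_add_distrib, mul_add, Finset.mul_sum, mul_assoc]
      ring
    rw [key]
    have hS : ∑ j ∈ Finset.range (k + 1), (stirlingFirst k j : ℂ) * (polylog (s - j - 1) z / z)
        = (∑ j ∈ Finset.range (k + 1), (stirlingFirst k j : ℂ) * polylog (s - j - 1) z) / z := by
      rw [Finset.sum_div]
      exact Finset.sum_congr rfl fun j _ => (mul_div_assoc _ _ _).symm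
    rw [hS]
    have hzp1 : z ^ ((-((k:ℕ)+1 : ℕ) : ℤ)) = z ^ ((-(k : ℤ)) - 1) := by
      congr 1; push_cast; ring
    have hzp2 : z ^ ((-(k : ℤ)) - 1) = z ^ (-(k : ℤ)) * z⁻¹ := by
      rw [zpow_sub_one₀ hz0]
    rw [hzp1, hzp2]
    field_simp
    push_cast
    ring

theorem polylog_iteratedDeriv (k : ℕ) (s : ℂ) (z : ℂ)
    (hz0 : z ≠ 0) (hz : ‖z‖ < 1) :
    iteratedDeriv k (polylog s) z
      = z ^ (-(k : ℤ)) *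
          ∑ j ∈ Finset.range (k + 1), (stirlingFirst k j : ℂ) * polylog (s - j) z := by
  exact polylog_aux s k z hz0 hz
end
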